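/- arXiv:2301.01359 — 4 statements merged into one kernel-verified Lean document; each statement's English description precedes it below -/
import Mathlib

section
/- For any cyclic shift c' of a composition c, the bivariate generating function of cylindric partitions with profile c equals that with profile c', i.e. F_c(z,q) = F_{c'}(z,q), where the exponent of z records the largest part and the exponent of q records the total size. -/
/-- `π : Fin r → ℕ → ℕ` is a cylindric partition with profile `c : Fin r → ℕ`
(indices `0,…,r-1` standing for `1,…,r`, cyclically) if each row is a weakly decreasing
sequence with finitely many nonzero parts, and `π^(i)_j ≥ π^(i+1)_{j + c_{i+1}}` cyclically. -/
def IsCylPart {r : ℕ} [NeZero r] (c : Fin r → ℕ) (π : Fin r → ℕ → ℕ) : Prop :=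
  (∀ i j, π i (j + 1) ≤ π i j) ∧
  (∀ i, ∃ N, ∀ j, N ≤ j → π i j = 0) ∧
  (∀ i j, π (i + 1) (j + c (i + 1)) ≤ π i j)

/-- Total size `|π|`: the sum of all parts. -/
noncomputable def cylSize {r : ℕ} (π : Fin r → ℕ → ℕ) : ℕ :=
  ∑ i, ∑ᶠ j, π i j

/-- The largest part of `π` (each row being weakly decreasing, its largest part is `π i 0`). -/
def cylMax {r : ℕ} (π : Fin r → ℕ → ℕ) : ℕ :=
  Finset.univ.sup fun i => π i 0

lemma isCylPart_shift {r : ℕ} [NeZero r] (c : Fin r → ℕ) (π : Fin r → ℕ → ℕ) (e : Fin r)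
    (h : IsCylPart c π) : IsCylPart (fun i => c (i + e)) (fun i => π (i + e)) := by
  obtain ⟨h1, h2, h3⟩ := h
  refine ⟨fun i j => h1 _ j, fun i => h2 _, fun i j => ?_⟩
  have := h3 (i + e) j
  simpa [add_right_comm] using this

lemma cylSize_shift {r : ℕ} (π : Fin r → ℕ → ℕ) (e : Fin r) [NeZero r] :
    cylSize (fun i => π (i + e)) = cylSize π := by
  unfold cylSize
  exact Fintype.sum_equiv (Equiv.addRight e) _ _ (fun i => rfl)

lemma cylMax_shift {r : ℕ} (π : Fin r → ℕ → ℕ) (e : Fin r) [NeZero r] :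
    cylMax (fun i => π (i + e)) = cylMax π := by
  unfold cylMax
  apply le_antisymm
  · exact Finset.sup_le fun i _ => Finset.le_sup (f := fun i => π i 0) (Finset.mem_univ (i + e))
  · refine Finset.sup_le fun i _ => ?_
    have : π i 0 = π ((i - e) + e) 0 := by rw [sub_add_cancel]
    rw [this]
    exact Finset.le_sup (f := fun i => π (i + e) 0) (Finset.mem_univ (i - e))

/-- For any cyclic shift `c'` of a profile `c`, the bivariate generating functions of cylindric
partitions agree: `F_c(z,q) = F_{c'}(z,q)`.  Stated coefficientwise: for every largest part `N`
and total size `M`, the number of cylindric partitions of profile `c` with largest part `N` and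
size `M` equals the corresponding number for the cyclically shifted profile `c'`. -/
theorem cylindric_genfun_cyclic_shift_invariant (r : ℕ) [NeZero r] (c : Fin r → ℕ) (d : Fin r)
    (M N : ℕ) :
    Nat.card {π : Fin r → ℕ → ℕ // IsCylPart c π ∧ cylSize π = M ∧ cylMax π = N} =
      Nat.card {π : Fin r → ℕ → ℕ //
        IsCylPart (fun i => c (i + d)) π ∧ cylSize π = M ∧ cylMax π = N} := by
  apply Nat.card_congr
  refine ⟨fun x => ⟨fun i => x.1 (i + d), ?_⟩, fun x => ⟨fun i => x.1 (i - d), ?_⟩, ?_, ?_⟩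
  · obtain ⟨π, hc, hs, hm⟩ := x
    exact ⟨isCylPart_shift c π d hc, by rw [cylSize_shift, hs], by rw [cylMax_shift, hm]⟩
  · obtain ⟨π, hc, hs, hm⟩ := x
    have h := isCylPart_shift (fun i => c (i + d)) π (-d) hc
    have e1 : (fun i => π (i + -d)) = fun i => π (i - d) := by
      funext i; rw [sub_eq_add_neg]
    have e2 : (fun i : Fin r => c (i + -d + d)) = c := by
      funext i; rw [neg_add_cancel_right]
    rw [e1, e2] at h
    refine ⟨h, ?_, ?_⟩
    · rw [← e1, cylSize_shift, hs]
    · rw [← e1, cylMax_shift, hm]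
  · intro x
    ext i
    simp [sub_add_cancel]
  · intro x
    ext i
    simp [sub_add_cancel]
end

section
/- Euler's Pentagonal Number Theorem: as formal power series, (q;q)_∞ = Σ_{i=-∞}^{∞} (-1)^i q^{i(3i+1)/2}. -/
open Finset PowerSeries

lemma coeff_prod_one_sub_pow (s : Finset ℕ) (N : ℕ) :
    (PowerSeries.coeff (R := ℤ) N) (∏ n ∈ s, (1 - (PowerSeries.X : PowerSeries ℤ) ^ n)) =
      ∑ T ∈ s.powerset, (if T.sum id = N then (-1 : ℤ) ^ T.card else 0) := by
  classical
  induction s using Finset.induction generalizing N with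
  | empty => simp [PowerSeries.coeff_one, eq_comm]
  | @insert a s ha ih =>
    rw [Finset.prod_insert ha, sub_mul, one_mul, map_sub, ih,
      PowerSeries.coeff_X_pow_mul', Finset.sum_powerset_insert ha]
    have key : ∀ T ∈ s.powerset,
        (if (insert a T).sum id = N then (-1 : ℤ) ^ (insert a T).card else 0)
          = -(if a ≤ N ∧ T.sum id = N - a then (-1 : ℤ) ^ T.card else 0) := by
      intro T hT
      have haT : a ∉ T := fun h => ha (Finset.mem_powerset.mp hT h)
      rw [Finset.sum_insert haT, Finset.card_insert_of_notMem haT]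
      by_cases h1 : a ≤ N ∧ T.sum id = N - a
      · rw [if_pos, if_pos h1]
        · ring
        · simp only [id] at h1 ⊢; omega
      · rw [if_neg (by simp only [id] at h1 ⊢; omega), if_neg h1]
        ring
    rw [Finset.sum_congr rfl key, Finset.sum_neg_distrib, sub_eq_add_neg]
    congr 2
    by_cases hN : a ≤ N
    · rw [if_pos hN, ih]
      exact Finset.sum_congr rfl fun T _ => by simp [hN]
    · rw [if_neg hN]
      rw [eq_comm, Finset.sum_eq_zero]
      intro T _
      rw [if_neg]; omega

namespace Franklin

def stair (S : Finset ℕ) (M : ℕ) : Finset ℕ := S.filter fun x => Finset.Icc x M ⊆ S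

lemma stair_nonempty (S : Finset ℕ) (h : S.Nonempty) : (stair S (S.max' h)).Nonempty := by
  refine ⟨S.max' h, ?_⟩
  simp only [stair, mem_filter, S.max'_mem h, true_and]
  intro x hx
  simp only [mem_Icc] at hx
  have hx' : x = S.max' h := le_antisymm hx.2 hx.1
  exact hx' ▸ S.max'_mem h

def bF (S : Finset ℕ) (h : S.Nonempty) : ℕ := (stair S (S.max' h)).min' (stair_nonempty S h)

lemma bF_mem (S : Finset ℕ) (h : S.Nonempty) : bF S h ∈ S :=
  (mem_filter.mp ((stair S (S.max' h)).min'_mem (stair_nonempty S h))).1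

lemma bF_stair (S : Finset ℕ) (h : S.Nonempty) : Finset.Icc (bF S h) (S.max' h) ⊆ S :=
  (mem_filter.mp ((stair S (S.max' h)).min'_mem (stair_nonempty S h))).2

lemma bF_le (S : Finset ℕ) (h : S.Nonempty) {a : ℕ} (ha : a ∈ S)
    (ha' : Finset.Icc a (S.max' h) ⊆ S) : bF S h ≤ a :=
  (stair S (S.max' h)).min'_le a (mem_filter.mpr ⟨ha, ha'⟩)

lemma bF_le_max (S : Finset ℕ) (h : S.Nonempty) : bF S h ≤ S.max' h :=
  S.le_max' _ (bF_mem S h)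

lemma min_le_bF (S : Finset ℕ) (h : S.Nonempty) : S.min' h ≤ bF S h :=
  S.min'_le _ (bF_mem S h)

lemma bF_pred_not_mem (S : Finset ℕ) (h : S.Nonempty) (h0 : 0 ∉ S) : bF S h - 1 ∉ S := by
  intro hc
  have hb1 : 1 ≤ bF S h := by
    rcases Nat.eq_zero_or_pos (bF S h) with h' | h'
    · exact absurd (h' ▸ bF_mem S h) h0
    · exact h'
  have : bF S h ≤ bF S h - 1 := by
    apply bF_le S h hc
    intro x hx
    simp only [mem_Icc] at hx
    rcases Nat.eq_or_lt_of_le hx.1 with h' | h'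
    · exact h' ▸ hc
    · exact bF_stair S h (mem_Icc.mpr ⟨by omega, hx.2⟩)
  omega

def frk (S : Finset ℕ) : Finset ℕ :=
  if h : S.Nonempty then
    if S.min' h ≤ S.max' h - bF S h + 1 then
      if 2 * S.min' h = S.max' h + 1 then S
      else insert (S.max' h + 1) ((S.erase (S.min' h)).erase (S.max' h - S.min' h + 1))
    else
      if S.max' h = 2 * (S.max' h - bF S h + 1) then S
      else insert (S.max' h - bF S h + 1) (insert (bF S h - 1) (S.erase (S.max' h)))
  else S

lemma frk_of_A (S : Finset ℕ) (h : S.Nonempty) (hA : S.min' h ≤ S.max' h - bF S h + 1)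
    (hx : 2 * S.min' h ≠ S.max' h + 1) :
    frk S = insert (S.max' h + 1) ((S.erase (S.min' h)).erase (S.max' h - S.min' h + 1)) := by
  rw [frk, dif_pos h, if_pos hA, if_neg hx]

lemma frk_of_B (S : Finset ℕ) (h : S.Nonempty) (hB : ¬ S.min' h ≤ S.max' h - bF S h + 1)
    (hx : S.max' h ≠ 2 * (S.max' h - bF S h + 1)) :
    frk S = insert (S.max' h - bF S h + 1) (insert (bF S h - 1) (S.erase (S.max' h))) := by
  rw [frk, dif_pos h, if_neg hB, if_neg hx]

lemma max'_eq {S : Finset ℕ} (h : S.Nonempty) {a : ℕ} (hmem : a ∈ S) (hub : ∀ x ∈ S, x ≤ a) :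
    S.max' h = a := le_antisymm (S.max'_le _ _ hub) (S.le_max' _ hmem)

lemma min'_eq {S : Finset ℕ} (h : S.Nonempty) {a : ℕ} (hmem : a ∈ S) (hlb : ∀ x ∈ S, a ≤ x) :
    S.min' h = a := le_antisymm (S.min'_le _ hmem) (le_min' _ _ _ hlb)

lemma bF_eq {S : Finset ℕ} (h : S.Nonempty) {a : ℕ} (hmem : a ∈ S)
    (hst : Finset.Icc a (S.max' h) ⊆ S)
    (hlb : ∀ x ∈ S, Finset.Icc x (S.max' h) ⊆ S → a ≤ x) :
    bF S h = a := le_antisymm (bF_le S h hmem hst) (hlb _ (bF_mem S h) (bF_stair S h))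

def Pent (S : Finset ℕ) : Prop :=
  ∃ k : ℕ, 0 < k ∧ (S = Finset.Icc k (2 * k - 1) ∨ S = Finset.Icc (k + 1) (2 * k))

lemma min'_Icc {a b : ℕ} (hab : a ≤ b) (h : (Finset.Icc a b).Nonempty) :
    (Finset.Icc a b).min' h = a :=
  min'_eq h (mem_Icc.mpr ⟨le_refl a, hab⟩) fun _ hx => (mem_Icc.mp hx).1

lemma max'_Icc {a b : ℕ} (hab : a ≤ b) (h : (Finset.Icc a b).Nonempty) :
    (Finset.Icc a b).max' h = b :=
  max'_eq h (mem_Icc.mpr ⟨hab, le_refl b⟩) fun _ hx => (mem_Icc.mp hx).2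

lemma caseA (S : Finset ℕ) (h : S.Nonempty) (h0 : 0 ∉ S)
    (hA : S.min' h ≤ S.max' h - bF S h + 1) (hx : 2 * S.min' h ≠ S.max' h + 1) :
    ∃ _ : (frk S).Nonempty, 0 ∉ frk S ∧ (frk S).sum id = S.sum id ∧
      (frk S).card + 1 = S.card ∧ frk (frk S) = S := by
  have hmM : S.min' h ≤ S.max' h := S.min'_le _ (S.max'_mem h)
  have hbm : S.min' h ≤ bF S h := min_le_bF S h
  have hbM : bF S h ≤ S.max' h := bF_le_max S h
  have hm1 : 1 ≤ S.min' h := Nat.pos_of_ne_zero (fun hc => h0 (hc ▸ S.min'_mem h))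
  set m := S.min' h with hmdef
  set M := S.max' h with hMdef
  set b := bF S h with hbdef
  -- basic arithmetic facts
  have h2m : 2 * m ≤ M := by omega
  have hmem_m : m ∈ S := S.min'_mem h
  have hkey : M - m + 1 ∈ S := by
    apply bF_stair S h
    rw [← hMdef, ← hbdef]
    exact mem_Icc.mpr ⟨by omega, by omega⟩
  have hne : m ≠ M - m + 1 := by omega
  have hM1 : M + 1 ∉ S := fun hc => absurd (S.le_max' _ hc) (by omega)
  have hkey_mem : M - m + 1 ∈ S.erase m := mem_erase.mpr ⟨fun hc => hne hc.symm, hkey⟩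
  set T := (S.erase m).erase (M - m + 1) with hTdef
  have hMT : M + 1 ∉ T := fun hc => hM1 (mem_of_mem_erase (mem_of_mem_erase hc))
  have hfrk : frk S = insert (M + 1) T := frk_of_A S h hA hx
  have hmemT : ∀ x, x ∈ T ↔ x ∈ S ∧ x ≠ m ∧ x ≠ M - m + 1 := by
    intro x
    simp only [hTdef, mem_erase]
    tauto
  have hmemS' : ∀ x, x ∈ insert (M + 1) T ↔ x = M + 1 ∨ (x ∈ S ∧ x ≠ m ∧ x ≠ M - m + 1) := by
    intro x
    simp only [mem_insert, hmemT]
  rw [hfrk]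
  have h' : (insert (M + 1) T).Nonempty := insert_nonempty _ _
  refine ⟨h', ?_, ?_, ?_, ?_⟩
  · -- 0 ∉
    rw [hmemS']
    rintro (hc | ⟨hc, -⟩)
    · omega
    · exact h0 hc
  · -- sum
    have e1 : (M - m + 1) + T.sum id = (S.erase m).sum id := by
      have := Finset.add_sum_erase (S.erase m) id hkey_mem
      simpa using this
    have e2 : m + (S.erase m).sum id = S.sum id := by
      have := Finset.add_sum_erase S id hmem_m
      simpa using this
    rw [Finset.sum_insert hMT]
    simp only [id] at *
    omega
  · -- card
    have hcd2 : 1 < S.card := Finset.one_lt_card.mpr ⟨m, hmem_m, _, hkey, hne⟩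
    rw [Finset.card_insert_of_notMem hMT, hTdef,
      Finset.card_erase_of_mem hkey_mem, Finset.card_erase_of_mem hmem_m]
    omega
  · -- involution
    set S' := insert (M + 1) T with hS'def
    have hmax' : S'.max' h' = M + 1 := by
      apply max'_eq h' (mem_insert_self _ _)
      intro x hx
      rcases (hmemS' x).mp hx with rfl | ⟨hxS, -, -⟩
      · exact le_refl _
      · exact le_trans (S.le_max' _ hxS) (Nat.le_succ M)
    have hm_lt : ∀ x ∈ S', m < x := by
      intro x hx
      rcases (hmemS' x).mp hx with rfl | ⟨hxS, hxm, -⟩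
      · omega
      · have := S.min'_le _ hxS
        omega
    have hkey_ne : (M - m + 1) ∉ S' := by
      rw [hmemS']
      rintro (hc | ⟨-, -, hc⟩)
      · omega
      · exact hc rfl
    have hbF' : bF S' h' = M - m + 2 := by
      apply bF_eq h'
      · rw [hmemS']
        by_cases hm1' : m = 1
        · left; omega
        · right
          refine ⟨bF_stair S h (mem_Icc.mpr ⟨by omega, by omega⟩), by omega, by omega⟩
      · rw [hmax']
        intro x hxIcc
        rw [mem_Icc] at hxIcc
        rw [hmemS']
        rcases Nat.eq_or_lt_of_le hxIcc.2 with heq | hlt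
        · left; exact heq
        · right
          refine ⟨bF_stair S h (mem_Icc.mpr ⟨by omega, by omega⟩),
            by omega, by omega⟩
      · intro x hxS' hIcc
        by_contra hlt
        push_neg at hlt
        exact hkey_ne (hIcc (mem_Icc.mpr ⟨by omega, by rw [hmax']; omega⟩))
    have hmin' : m < S'.min' h' := hm_lt _ (S'.min'_mem h')
    have harr1 : S'.max' h' - bF S' h' + 1 = m := by rw [hmax', hbF']; omega
    have hB' : ¬ S'.min' h' ≤ S'.max' h' - bF S' h' + 1 := by rw [harr1]; omega
    have hx' : S'.max' h' ≠ 2 * (S'.max' h' - bF S' h' + 1) := by rw [harr1, hmax']; omega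
    rw [frk_of_B S' h' hB' hx', harr1, hbF', hmax']
    have harr2 : M - m + 2 - 1 = M - m + 1 := by omega
    rw [harr2, show S'.erase (M+1) = T from Finset.erase_insert hMT,
      hTdef, Finset.insert_erase hkey_mem, Finset.insert_erase hmem_m]

lemma caseB (S : Finset ℕ) (h : S.Nonempty) (h0 : 0 ∉ S)
    (hB : ¬ S.min' h ≤ S.max' h - bF S h + 1) (hx : S.max' h ≠ 2 * (S.max' h - bF S h + 1)) :
    ∃ _ : (frk S).Nonempty, 0 ∉ frk S ∧ (frk S).sum id = S.sum id ∧
      S.card + 1 = (frk S).card ∧ frk (frk S) = S := by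
  have hmM : S.min' h ≤ S.max' h := S.min'_le _ (S.max'_mem h)
  have hbm : S.min' h ≤ bF S h := min_le_bF S h
  have hbM : bF S h ≤ S.max' h := bF_le_max S h
  have hm1 : 1 ≤ S.min' h := Nat.pos_of_ne_zero (fun hc => h0 (hc ▸ S.min'_mem h))
  set m := S.min' h with hmdef
  set M := S.max' h with hMdef
  set b := bF S h with hbdef
  have hb2 : 2 ≤ b := by omega
  have hrb : M - b + 1 < b - 1 := by omega
  have hMmem : M ∈ S := S.max'_mem h
  have hr_not : M - b + 1 ∉ S := fun hc => by have := S.min'_le _ hc; omega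
  have hb1_not : b - 1 ∉ S := bF_pred_not_mem S h h0
  have hb1_not' : b - 1 ∉ S.erase M := fun hc => hb1_not (mem_of_mem_erase hc)
  have hr_not' : (M - b + 1) ∉ insert (b - 1) (S.erase M) := by
    rw [mem_insert]
    rintro (hc | hc)
    · omega
    · exact hr_not (mem_of_mem_erase hc)
  set T := insert (b - 1) (S.erase M) with hTdef
  set S' := insert (M - b + 1) T with hS'def
  have hfrk : frk S = S' := frk_of_B S h hB hx
  have hmemS' : ∀ x, x ∈ S' ↔ x = M - b + 1 ∨ x = b - 1 ∨ (x ∈ S ∧ x ≠ M) := by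
    intro x
    simp only [hS'def, hTdef, mem_insert, mem_erase]
    tauto
  rw [hfrk]
  have h' : S'.Nonempty := insert_nonempty _ _
  refine ⟨h', ?_, ?_, ?_, ?_⟩
  · rw [hmemS']
    rintro (hc | hc | ⟨hc, -⟩)
    · omega
    · omega
    · exact h0 hc
  · have e2 : M + (S.erase M).sum id = S.sum id := by
      have := Finset.add_sum_erase S id hMmem
      simpa using this
    rw [hS'def, Finset.sum_insert hr_not', hTdef, Finset.sum_insert hb1_not']
    simp only [id] at *
    omega
  · rw [hS'def, Finset.card_insert_of_notMem hr_not', hTdef,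
      Finset.card_insert_of_notMem hb1_not', Finset.card_erase_of_mem hMmem]
    have : 1 ≤ S.card := Finset.card_pos.mpr h
    omega
  · have hmax' : S'.max' h' = M - 1 := by
      apply max'_eq h'
      · rw [hmemS']
        by_cases hb' : b = M
        · right; left; omega
        · right; right
          exact ⟨bF_stair S h (mem_Icc.mpr ⟨by omega, by omega⟩), by omega⟩
      · intro x hxmem
        rcases (hmemS' x).mp hxmem with hc | hc | ⟨hc, hc'⟩
        · omega
        · omega
        · have := S.le_max' _ hc; omega
    have hmin' : S'.min' h' = M - b + 1 := by
      apply min'_eq h' (by rw [hmemS']; left; rfl)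
      intro x hxmem
      rcases (hmemS' x).mp hxmem with hc | hc | ⟨hc, -⟩
      · omega
      · omega
      · have := S.min'_le _ hc; omega
    have hbF'_le : bF S' h' ≤ b - 1 := by
      apply bF_le S' h' (by rw [hmemS']; right; left; rfl)
      rw [hmax']
      intro x hxIcc
      rw [mem_Icc] at hxIcc
      rw [hmemS']
      rcases Nat.eq_or_lt_of_le hxIcc.1 with heq | hlt
      · right; left; omega
      · right; right
        exact ⟨bF_stair S h (mem_Icc.mpr ⟨by omega, by omega⟩), by omega⟩
    have hA' : S'.min' h' ≤ S'.max' h' - bF S' h' + 1 := by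
      rw [hmin', hmax']; omega
    have hx' : 2 * S'.min' h' ≠ S'.max' h' + 1 := by rw [hmin', hmax']; omega
    rw [frk_of_A S' h' hA' hx', hmin', hmax']
    have harr1 : M - 1 + 1 = M := by omega
    have harr2 : M - 1 - (M - b + 1) + 1 = b - 1 := by omega
    rw [harr1, harr2, hS'def, Finset.erase_insert hr_not', hTdef,
      Finset.erase_insert hb1_not', Finset.insert_erase hMmem]

lemma pent_of_A_fix (S : Finset ℕ) (h : S.Nonempty) (h0 : 0 ∉ S)
    (hA : S.min' h ≤ S.max' h - bF S h + 1) (heq : 2 * S.min' h = S.max' h + 1) :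
    Pent S := by
  have hmM : S.min' h ≤ S.max' h := S.min'_le _ (S.max'_mem h)
  have hbm : S.min' h ≤ bF S h := min_le_bF S h
  have hbM : bF S h ≤ S.max' h := bF_le_max S h
  have hm1 : 1 ≤ S.min' h := Nat.pos_of_ne_zero (fun hc => h0 (hc ▸ S.min'_mem h))
  refine ⟨S.min' h, hm1, Or.inl ?_⟩
  have hb : bF S h = S.min' h := by omega
  apply Finset.Subset.antisymm
  · intro x hx
    rw [mem_Icc]
    exact ⟨S.min'_le _ hx, by have := S.le_max' _ hx; omega⟩
  · intro x hx
    rw [mem_Icc] at hx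
    exact bF_stair S h (mem_Icc.mpr ⟨by omega, by omega⟩)

lemma pent_of_B_fix (S : Finset ℕ) (h : S.Nonempty) (h0 : 0 ∉ S)
    (hB : ¬ S.min' h ≤ S.max' h - bF S h + 1) (heq : S.max' h = 2 * (S.max' h - bF S h + 1)) :
    Pent S := by
  have hmM : S.min' h ≤ S.max' h := S.min'_le _ (S.max'_mem h)
  have hbm : S.min' h ≤ bF S h := min_le_bF S h
  have hbM : bF S h ≤ S.max' h := bF_le_max S h
  have hm1 : 1 ≤ S.min' h := Nat.pos_of_ne_zero (fun hc => h0 (hc ▸ S.min'_mem h))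
  refine ⟨S.max' h - bF S h + 1, by omega, Or.inr ?_⟩
  apply Finset.Subset.antisymm
  · intro x hx
    rw [mem_Icc]
    exact ⟨by have := S.min'_le _ hx; omega, by have := S.le_max' _ hx; omega⟩
  · intro x hx
    rw [mem_Icc] at hx
    exact bF_stair S h (mem_Icc.mpr ⟨by omega, by omega⟩)

lemma frk_of_pent (S : Finset ℕ) (hP : Pent S) : frk S = S := by
  obtain ⟨k, hk, hS | hS⟩ := hP
  · subst hS
    have h : (Finset.Icc k (2 * k - 1)).Nonempty := Finset.nonempty_Icc.mpr (by omega)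
    set S := Finset.Icc k (2 * k - 1) with hS
    have hmin : S.min' h = k := min'_Icc (by omega) h
    have hmax : S.max' h = 2 * k - 1 := max'_Icc (by omega) h
    have hb : bF S h = k := by
      apply bF_eq h
      · rw [hS]; exact mem_Icc.mpr ⟨le_refl _, by omega⟩
      · rw [hmax, hS]
      · intro x hx _
        rw [hS, mem_Icc] at hx
        exact hx.1
    rw [frk, dif_pos h, hmin, hmax, hb, if_pos (by omega), if_pos (by omega)]
  · subst hS
    have h : (Finset.Icc (k + 1) (2 * k)).Nonempty := Finset.nonempty_Icc.mpr (by omega)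
    set S := Finset.Icc (k + 1) (2 * k) with hS
    have hmin : S.min' h = k + 1 := min'_Icc (by omega) h
    have hmax : S.max' h = 2 * k := max'_Icc (by omega) h
    have hb : bF S h = k + 1 := by
      apply bF_eq h
      · rw [hS]; exact mem_Icc.mpr ⟨le_refl _, by omega⟩
      · rw [hmax, hS]
      · intro x hx _
        rw [hS, mem_Icc] at hx
        exact hx.1
    rw [frk, dif_pos h, hmin, hmax, hb, if_neg (by omega), if_pos (by omega)]

lemma frk_spec (S : Finset ℕ) (h : S.Nonempty) (h0 : 0 ∉ S) (hP : ¬ Pent S) :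
    (frk S).Nonempty ∧ 0 ∉ frk S ∧ (frk S).sum id = S.sum id ∧
      ((-1 : ℤ) ^ S.card + (-1 : ℤ) ^ (frk S).card = 0) ∧ frk (frk S) = S ∧
      ¬ Pent (frk S) ∧ frk S ≠ S := by
  have main : (frk S).Nonempty ∧ 0 ∉ frk S ∧ (frk S).sum id = S.sum id ∧
      ((-1 : ℤ) ^ S.card + (-1 : ℤ) ^ (frk S).card = 0) ∧ frk (frk S) = S ∧ frk S ≠ S := by
    by_cases hA : S.min' h ≤ S.max' h - bF S h + 1
    · have hx : 2 * S.min' h ≠ S.max' h + 1 := fun heq => hP (pent_of_A_fix S h h0 hA heq)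
      obtain ⟨h', h0', hsum, hcard, hinv⟩ := caseA S h h0 hA hx
      refine ⟨h', h0', hsum, ?_, hinv, ?_⟩
      · rw [← hcard, pow_succ]; ring
      · intro he
        rw [he] at hcard
        omega
    · have hx : S.max' h ≠ 2 * (S.max' h - bF S h + 1) := fun heq => hP (pent_of_B_fix S h h0 hA heq)
      obtain ⟨h', h0', hsum, hcard, hinv⟩ := caseB S h h0 hA hx
      refine ⟨h', h0', hsum, ?_, hinv, ?_⟩
      · rw [← hcard, pow_succ]; ring
      · intro he
        rw [he] at hcard
        omega
  obtain ⟨h', h0', hsum, hsgn, hinv, hne⟩ := main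
  refine ⟨h', h0', hsum, hsgn, hinv, ?_, hne⟩
  intro hp
  exact hne ((frk_of_pent _ hp).symm.trans hinv)

lemma two_mul_sum_Icc_succ (k : ℕ) :
    2 * ((Finset.Icc (k + 1) (2 * k)).sum id) = 3 * k * k + k := by
  have e : (∑ x ∈ range (k + 1), x) + (∑ x ∈ Finset.Icc (k + 1) (2 * k), x)
      = ∑ x ∈ range (2 * k + 1), x := by
    rw [range_eq_Ico, range_eq_Ico, ← Finset.Ico_add_one_right_eq_Icc (k + 1) (2 * k)]
    exact Finset.sum_Ico_consecutive (fun x : ℕ => x) (m := 0) (n := k + 1) (k := 2 * k + 1) (by omega) (by omega)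
  have e1 : (∑ i ∈ range (k + 1), i) * 2 = (k + 1) * k := by
    simpa using Finset.sum_range_id_mul_two (k + 1)
  have e2 : (∑ i ∈ range (2 * k + 1), i) * 2 = (2 * k + 1) * (2 * k) := by
    simpa using Finset.sum_range_id_mul_two (2 * k + 1)
  simp only [id]
  ring_nf at e e1 e2 ⊢
  linarith

lemma two_mul_sum_Icc_self (k : ℕ) (hk : 1 ≤ k) :
    2 * ((Finset.Icc k (2 * k - 1)).sum id) + k = 3 * k * k := by
  obtain ⟨j, rfl⟩ : ∃ j, k = j + 1 := ⟨k - 1, by omega⟩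
  have h1 : 2 * (j + 1) - 1 = 2 * j + 1 := by omega
  rw [h1]
  have e : (∑ x ∈ range (j + 1), x) + (∑ x ∈ Finset.Icc (j + 1) (2 * j + 1), x)
      = ∑ x ∈ range (2 * j + 2), x := by
    rw [range_eq_Ico, range_eq_Ico, ← Finset.Ico_add_one_right_eq_Icc (j + 1) (2 * j + 1)]
    exact Finset.sum_Ico_consecutive (fun x : ℕ => x) (m := 0) (n := j + 1) (k := 2 * j + 1 + 1) (by omega) (by omega)
  have e1 : (∑ i ∈ range (j + 1), i) * 2 = (j + 1) * j := by
    simpa using Finset.sum_range_id_mul_two (j + 1)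
  have e2 : (∑ i ∈ range (2 * j + 2), i) * 2 = (2 * j + 2) * (2 * j + 1) := by
    simpa using Finset.sum_range_id_mul_two (2 * j + 2)
  simp only [id]
  ring_nf at e e1 e2 ⊢
  linarith

def pentIdx (S : Finset ℕ) : ℤ :=
  if Even (WithBot.unbotD 0 S.max) then (S.card : ℤ) else -(S.card : ℤ)

lemma max_unbot'_Icc {a b : ℕ} (hab : a ≤ b) : WithBot.unbotD 0 (Finset.Icc a b).max = b := by
  have h : (Finset.Icc a b).Nonempty := Finset.nonempty_Icc.mpr hab
  rw [← Finset.coe_max' h, max'_Icc hab h, WithBot.unbotD_coe]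

lemma card_type1 (k : ℕ) (hk : 1 ≤ k) : (Finset.Icc k (2 * k - 1)).card = k := by
  rw [Nat.card_Icc]; omega

lemma card_type2 (k : ℕ) : (Finset.Icc (k + 1) (2 * k)).card = k := by
  rw [Nat.card_Icc]; omega

lemma pentIdx_type2 (k : ℕ) (hk : 1 ≤ k) : pentIdx (Finset.Icc (k + 1) (2 * k)) = k := by
  rw [pentIdx, max_unbot'_Icc (by omega), if_pos ⟨k, by omega⟩, card_type2]

lemma pentIdx_type1 (k : ℕ) (hk : 1 ≤ k) : pentIdx (Finset.Icc k (2 * k - 1)) = -k := by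
  rw [pentIdx, max_unbot'_Icc (by omega), if_neg (by rintro ⟨r, hr⟩; omega), card_type1 k hk]

def phiF (i : ℤ) : Finset ℕ :=
  if 0 ≤ i then Finset.Icc (i.toNat + 1) (2 * i.toNat)
  else Finset.Icc i.natAbs (2 * i.natAbs - 1)

noncomputable instance : DecidablePred Pent := fun _ => Classical.dec _

lemma pent_side_sum (N : ℕ) (hN : 1 ≤ N) :
    (∑ S ∈ (((Finset.Icc 1 N).powerset.filter fun T => T.sum id = N).filter Pent),
      (-1 : ℤ) ^ S.card)
      = ∑ i ∈ ((Finset.Icc (-(N : ℤ)) (N : ℤ)).filter fun i => i * (3 * i + 1) = 2 * (N : ℤ)),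
          (-1 : ℤ) ^ i.natAbs := by
  apply Finset.sum_nbij' pentIdx phiF
  · -- maps into ℤ side
    intro S hS
    simp only [mem_filter, mem_powerset] at hS
    obtain ⟨⟨hsub, hsum⟩, k, hk, hC | hC⟩ := hS
    · subst hC
      have hg : 2 * N + k = 3 * k * k := by rw [← two_mul_sum_Icc_self k hk, hsum]
      have hkN : k ≤ N := by nlinarith
      rw [pentIdx_type1 k hk, mem_filter, mem_Icc]
      refine ⟨⟨by omega, by omega⟩, ?_⟩
      have hc : 2 * (N : ℤ) + k = 3 * k * k := by exact_mod_cast hg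
      ring_nf
      ring_nf at hc
      linarith
    · subst hC
      have hg : 2 * N = 3 * k * k + k := by rw [← two_mul_sum_Icc_succ k, hsum]
      have hkN : k ≤ N := by nlinarith
      rw [pentIdx_type2 k hk, mem_filter, mem_Icc]
      refine ⟨⟨by omega, by omega⟩, ?_⟩
      have hc : 2 * (N : ℤ) = 3 * k * k + k := by exact_mod_cast hg
      ring_nf
      ring_nf at hc
      linarith
  · -- maps into pent side
    intro i hi
    simp only [mem_filter, mem_Icc] at hi
    obtain ⟨⟨hi1, hi2⟩, heq⟩ := hi
    have hine : i ≠ 0 := by rintro rfl; simp at heq; omega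
    rcases le_or_gt 0 i with hpos | hneg
    · set k := i.toNat with hkdef
      have hik : (k : ℤ) = i := Int.toNat_of_nonneg hpos
      have hk1 : 1 ≤ k := by omega
      have hgZ : 2 * (N : ℤ) = 3 * k * k + k := by rw [← heq, ← hik]; ring
      have hg : 2 * N = 3 * k * k + k := by exact_mod_cast hgZ
      have h2kN : 2 * k ≤ N := by nlinarith
      rw [phiF, if_pos hpos, mem_filter, mem_filter, mem_powerset]
      refine ⟨⟨?_, ?_⟩, k, hk1, Or.inr rfl⟩
      · intro x hx
        rw [mem_Icc] at hx ⊢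
        omega
      · show (Finset.Icc (k + 1) (2 * k)).sum id = N
        have := two_mul_sum_Icc_succ k
        omega
    · set k := i.natAbs with hkdef
      have hik : i = -(k : ℤ) := by omega
      have hk1 : 1 ≤ k := by omega
      have hgZ : 2 * (N : ℤ) + k = 3 * k * k := by
        rw [hik] at heq
        ring_nf at heq ⊢
        linarith
      have hg : 2 * N + k = 3 * k * k := by exact_mod_cast hgZ
      have h2kN : 2 * k ≤ N + 1 := by
        clear_value k
        obtain ⟨j, rfl⟩ : ∃ j, k = j + 1 := ⟨k - 1, by omega⟩
        nlinarith
      rw [phiF, if_neg (by omega), mem_filter, mem_filter, mem_powerset]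
      refine ⟨⟨?_, ?_⟩, k, hk1, Or.inl rfl⟩
      · intro x hx
        rw [mem_Icc] at hx ⊢
        omega
      · show (Finset.Icc k (2 * k - 1)).sum id = N
        have := two_mul_sum_Icc_self k hk1
        omega
  · -- left inverse
    intro S hS
    simp only [mem_filter, mem_powerset] at hS
    obtain ⟨-, k, hk, hC | hC⟩ := hS
    · subst hC
      rw [pentIdx_type1 k hk, phiF, if_neg (by omega)]
      have : (-(k : ℤ)).natAbs = k := by omega
      rw [this]
    · subst hC
      rw [pentIdx_type2 k hk, phiF, if_pos (by positivity)]
      have : ((k : ℤ)).toNat = k := by omega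
      rw [this]
  · -- right inverse
    intro i hi
    simp only [mem_filter, mem_Icc] at hi
    obtain ⟨⟨hi1, hi2⟩, heq⟩ := hi
    have hine : i ≠ 0 := by rintro rfl; simp at heq; omega
    rcases le_or_gt 0 i with hpos | hneg
    · have hk1 : 1 ≤ i.toNat := by omega
      rw [phiF, if_pos hpos, pentIdx_type2 _ hk1]
      omega
    · have hk1 : 1 ≤ i.natAbs := by omega
      rw [phiF, if_neg (by omega), pentIdx_type1 _ hk1]
      omega
  · -- values
    intro S hS
    simp only [mem_filter, mem_powerset] at hS
    obtain ⟨-, k, hk, hC | hC⟩ := hS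
    · subst hC
      rw [pentIdx_type1 k hk, card_type1 k hk]
      simp [Int.natAbs_neg]
    · subst hC
      rw [pentIdx_type2 k hk, card_type2]
      simp

lemma mem_D {N : ℕ} {S : Finset ℕ}
    (hS : S ∈ (((Finset.Icc 1 N).powerset.filter fun T => T.sum id = N).filter
      fun S => ¬ Pent S)) (hN : 1 ≤ N) :
    S.Nonempty ∧ 0 ∉ S ∧ ¬ Pent S := by
  simp only [mem_filter, mem_powerset] at hS
  obtain ⟨⟨hsub, hsum⟩, hnp⟩ := hS
  have hne : S.Nonempty := by
    rcases S.eq_empty_or_nonempty with rfl | h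
    · simp at hsum; omega
    · exact h
  refine ⟨hne, fun hc => ?_, hnp⟩
  have := hsub hc
  rw [mem_Icc] at this
  omega

lemma frk_mem_D {N : ℕ} (hN : 1 ≤ N) {S : Finset ℕ}
    (hS : S ∈ (((Finset.Icc 1 N).powerset.filter fun T => T.sum id = N).filter
      fun S => ¬ Pent S)) :
    frk S ∈ (((Finset.Icc 1 N).powerset.filter fun T => T.sum id = N).filter
      fun S => ¬ Pent S) := by
  obtain ⟨hne, h0, hnp⟩ := mem_D hS hN
  obtain ⟨h', h0', hsum', _, _, hnp', _⟩ := frk_spec S hne h0 hnp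
  simp only [mem_filter, mem_powerset] at hS ⊢
  obtain ⟨⟨hsub, hsum⟩, -⟩ := hS
  refine ⟨⟨?_, by rw [hsum', hsum]⟩, hnp'⟩
  intro x hx
  rw [mem_Icc]
  constructor
  · rcases Nat.eq_zero_or_pos x with rfl | h
    · exact absurd hx h0'
    · exact h
  · calc x = id x := rfl
      _ ≤ (frk S).sum id := Finset.single_le_sum (fun i _ => Nat.zero_le (id i)) hx
      _ = N := by rw [hsum', hsum]

lemma nonpent_side_sum (N : ℕ) (hN : 1 ≤ N) :
    (∑ S ∈ (((Finset.Icc 1 N).powerset.filter fun T => T.sum id = N).filter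
      fun S => ¬ Pent S), (-1 : ℤ) ^ S.card) = 0 := by
  apply Finset.sum_involution (fun S _ => frk S)
  · intro S hS
    obtain ⟨hne, h0, hnp⟩ := mem_D hS hN
    obtain ⟨_, _, _, hsgn, _, _, _⟩ := frk_spec S hne h0 hnp
    exact hsgn
  · intro S hS _
    obtain ⟨hne, h0, hnp⟩ := mem_D hS hN
    obtain ⟨_, _, _, _, _, _, hne'⟩ := frk_spec S hne h0 hnp
    exact hne'
  · intro S hS
    exact frk_mem_D hN hS
  · intro S hS
    obtain ⟨hne, h0, hnp⟩ := mem_D hS hN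
    obtain ⟨_, _, _, _, hinv, _, _⟩ := frk_spec S hne h0 hnp
    exact hinv

end Franklin

/-- Euler's Pentagonal Number Theorem, stated coefficientwise:
for every `N`, the coefficient of `q^N` in the infinite product `(q;q)_∞ = ∏_{n≥1}(1-q^n)`
(which coincides with that of the partial product `∏_{n=1}^{N}(1-q^n)`, since further factors
do not affect coefficients up to degree `N`) equals `Σ_{i∈ℤ} (-1)^i [i(3i+1)/2 = N]`. -/
theorem euler_pentagonal_number_theorem :
    ∀ N : ℕ,
      (PowerSeries.coeff (R := ℤ) N) (∏ n ∈ Finset.range N, (1 - (PowerSeries.X : PowerSeries ℤ) ^ (n + 1))) =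
        ∑ i ∈ Finset.Icc (-(N : ℤ)) (N : ℤ),
          (if i * (3 * i + 1) = 2 * (N : ℤ) then (-1 : ℤ) ^ i.natAbs else 0) := by
  intro N
  rcases Nat.eq_zero_or_pos N with rfl | hN
  · norm_num
  · have himg : Finset.Icc 1 N = (Finset.range N).image (· + 1) := by
      ext x
      simp only [mem_Icc, mem_image, mem_range]
      constructor
      · rintro ⟨h1, h2⟩; exact ⟨x - 1, by omega, by omega⟩
      · rintro ⟨y, hy, rfl⟩; omega
    have hprod : (∏ n ∈ Finset.range N, (1 - (PowerSeries.X : PowerSeries ℤ) ^ (n + 1)))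
        = ∏ k ∈ Finset.Icc 1 N, (1 - (PowerSeries.X : PowerSeries ℤ) ^ k) := by
      rw [himg, Finset.prod_image]
      intro x _ y _ h
      simp only at h
      omega
    rw [hprod, coeff_prod_one_sub_pow]
    have e1 : (∑ T ∈ (Finset.Icc 1 N).powerset, if T.sum id = N then (-1 : ℤ) ^ T.card else 0)
        = ∑ T ∈ (Finset.Icc 1 N).powerset.filter (fun T => T.sum id = N), (-1 : ℤ) ^ T.card :=
      (Finset.sum_filter _ _).symm
    have e2 : (∑ i ∈ Finset.Icc (-(N : ℤ)) (N : ℤ),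
          if i * (3 * i + 1) = 2 * (N : ℤ) then (-1 : ℤ) ^ i.natAbs else 0)
        = ∑ i ∈ (Finset.Icc (-(N : ℤ)) (N : ℤ)).filter (fun i => i * (3 * i + 1) = 2 * (N : ℤ)),
            (-1 : ℤ) ^ i.natAbs :=
      (Finset.sum_filter _ _).symm
    rw [e1, e2, ← Finset.sum_filter_add_sum_filter_not
      ((Finset.Icc 1 N).powerset.filter fun T => T.sum id = N) Franklin.Pent
      (fun T => (-1 : ℤ) ^ T.card)]
    rw [Franklin.nonpent_side_sum N hN, add_zero, Franklin.pent_side_sum N hN]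
end

section
/- The second Rogers–Ramanujan identity: Σ_{n≥0} q^{n^2+n}/(q;q)_n = 1/((q^2;q^5)_∞ (q^3;q^5)_∞) as formal power series in q. -/
open PowerSeries Finset

noncomputable section
namespace RR2

abbrev PS := PowerSeries ℚ

/-- `F a m = ∏_{i<m} (1 - X^(a*(i+1)))`. -/
def F (a m : ℕ) : PS := ∏ i ∈ Finset.range m, (1 - (X : PS) ^ (a * (i+1)))

/-- Gaussian binomial with base `X^a`, defined by the q-Pascal recursion. -/
def gb (a : ℕ) : ℕ → ℕ → PS
  | _, 0 => 1
  | 0, _+1 => 0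
  | n+1, k+1 => gb a n k + X ^ (a * (k+1)) * gb a n (k+1)

@[simp] lemma gb_zero_right (a n : ℕ) : gb a n 0 = 1 := by cases n <;> rfl
@[simp] lemma gb_zero_left (a k : ℕ) : gb a 0 (k+1) = 0 := rfl
lemma gb_succ (a n k : ℕ) :
    gb a (n+1) (k+1) = gb a n k + X ^ (a * (k+1)) * gb a n (k+1) := rfl

lemma gb_eq_zero (a : ℕ) : ∀ {n k : ℕ}, n < k → gb a n k = 0
  | 0, k+1, _ => rfl
  | n+1, k+1, h => by
      rw [gb_succ, gb_eq_zero a (by omega), gb_eq_zero a (by omega), mul_zero, add_zero]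

@[simp] lemma gb_diag (a : ℕ) : ∀ n, gb a n n = 1
  | 0 => rfl
  | n+1 => by rw [gb_succ, gb_diag a n, gb_eq_zero a (by omega), mul_zero, add_zero]

@[simp] lemma F_zero (a : ℕ) : F a 0 = 1 := rfl
lemma F_succ (a m : ℕ) : F a (m+1) = F a m * (1 - X ^ (a * (m+1))) :=
  Finset.prod_range_succ _ _

lemma X_pow_mul_X_pow (s t : ℕ) : (X : PS) ^ s * X ^ t = X ^ (s + t) := (pow_add _ _ _).symm

lemma X_pow_prod_eq (s t u : ℕ) (h : s + t = u) : (X : PS) ^ s * X ^ t = X ^ u := by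
  rw [X_pow_mul_X_pow, h]

lemma mul_eq_of_plus (a : ℕ) {s t u : ℕ} (h : s + t = u) : a * s + a * t = a * u := by
  rw [← h, Nat.mul_add]

/-- Product formula for the Gaussian binomials. -/
lemma gb_mul (a : ℕ) : ∀ n k : ℕ, k ≤ n → F a k * F a (n-k) * gb a n k = F a n := by
  intro n
  induction n with
  | zero => intro k hk; interval_cases k; simp
  | succ n ih =>
    intro k hk
    match k with
    | 0 => simp
    | k+1 =>
      have hkn : k ≤ n := by omega
      have hnk : n+1-(k+1) = n-k := by omega
      rw [gb_succ, hnk, mul_add]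
      have hFk : F a (k+1) = F a k * (1 - X ^ (a*(k+1))) := F_succ a k
      have h1 : F a (k+1) * F a (n-k) * gb a n k = (1 - X ^ (a*(k+1))) * F a n := by
        rw [hFk]
        calc F a k * (1 - X ^ (a*(k+1))) * F a (n-k) * gb a n k
            = (1 - X ^ (a*(k+1))) * (F a k * F a (n-k) * gb a n k) := by ring
          _ = _ := by rw [ih k hkn]
      rw [h1]
      rcases eq_or_lt_of_le hkn with h | hlt
      · subst h
        rw [gb_eq_zero a (by omega), mul_zero, mul_zero, add_zero, F_succ]
        ring
      · have hk1n : k+1 ≤ n := hlt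
        have hnk2 : n-k = (n-(k+1))+1 := by omega
        have hF : F a (n-k) = F a (n-(k+1)) * (1 - X^(a*(n-k))) := by
          have := F_succ a (n-(k+1))
          rw [← hnk2] at this
          exact this
        have h2 : F a (k+1) * F a (n-k) * (X ^ (a*(k+1)) * gb a n (k+1))
            = X ^ (a*(k+1)) * ((1 - X ^ (a*(n-k))) * F a n) := by
          rw [hF]
          calc F a (k+1) * (F a (n-(k+1)) * (1 - X ^ (a*(n-k)))) * (X ^ (a*(k+1)) * gb a n (k+1))
              = X ^ (a*(k+1)) * ((1 - X ^ (a*(n-k))) * (F a (k+1) * F a (n-(k+1)) * gb a n (k+1))) := by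
                ring
            _ = _ := by rw [ih (k+1) hk1n]
        rw [h2, F_succ]
        have hX : (X:PS) ^ (a*(k+1)) * X ^ (a*(n-k)) = X ^ (a*(n+1)) :=
          X_pow_prod_eq _ _ _ (mul_eq_of_plus a (by omega))
        linear_combination (-(F a n)) * hX

lemma constantCoeff_F (a m : ℕ) (ha : 1 ≤ a) : constantCoeff (R := ℚ) (F a m) = 1 := by
  rw [F, map_prod]
  rw [Finset.prod_eq_one]
  intro i _
  have : (constantCoeff (R := ℚ)) ((X : PS) ^ (a*(i+1))) = 0 := by
    rw [map_pow, constantCoeff_X, zero_pow (by positivity)]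
  rw [map_sub, map_one, this, sub_zero]

lemma F_ne_zero (a m : ℕ) (ha : 1 ≤ a) : F a m ≠ 0 := by
  intro h
  have := constantCoeff_F a m ha
  rw [h, map_zero] at this
  exact one_ne_zero this.symm

lemma F_inv_mul (a m : ℕ) (ha : 1 ≤ a) : (F a m)⁻¹ * F a m = 1 :=
  PowerSeries.inv_mul_cancel _ (by rw [constantCoeff_F a m ha]; exact one_ne_zero)

/-- the other q-Pascal identity. -/
lemma gb_pascal1 (a : ℕ) (ha : 1 ≤ a) (n k : ℕ) (hk : k ≤ n) :
    gb a (n+1) (k+1) = gb a n (k+1) + X ^ (a * (n-k)) * gb a n k := by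
  have hne : F a (k+1) * F a (n-k) ≠ 0 :=
    mul_ne_zero (F_ne_zero _ _ ha) (F_ne_zero _ _ ha)
  apply mul_left_cancel₀ hne
  have hL : F a (k+1) * F a (n-k) * gb a (n+1) (k+1) = F a (n+1) := by
    have h' : n - k = (n+1) - (k+1) := by omega
    rw [h']; exact gb_mul a (n+1) (k+1) (by omega)
  rw [hL, mul_add]
  rcases eq_or_lt_of_le hk with h | hlt
  · subst h
    rw [gb_eq_zero a (by omega), mul_zero, zero_add, Nat.sub_self, Nat.mul_zero, pow_zero,
        one_mul, gb_diag, mul_one, F_zero, mul_one]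
  · have hk1n : k+1 ≤ n := hlt
    have hnk2 : n-k = (n-(k+1))+1 := by omega
    have hF : F a (n-k) = F a (n-(k+1)) * (1 - X^(a*(n-k))) := by
      have := F_succ a (n-(k+1))
      rw [← hnk2] at this
      exact this
    have h1 : F a (k+1) * F a (n-k) * gb a n (k+1) = (1 - X ^ (a*(n-k))) * F a n := by
      rw [hF]
      calc F a (k+1) * (F a (n-(k+1)) * (1 - X ^ (a*(n-k)))) * gb a n (k+1)
          = (1 - X ^ (a*(n-k))) * (F a (k+1) * F a (n-(k+1)) * gb a n (k+1)) := by ring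
        _ = _ := by rw [gb_mul a n (k+1) hk1n]
    have hFk : F a (k+1) = F a k * (1 - X ^ (a*(k+1))) := F_succ a k
    have h2 : F a (k+1) * F a (n-k) * (X ^ (a*(n-k)) * gb a n k)
        = X ^ (a*(n-k)) * ((1 - X ^ (a*(k+1))) * F a n) := by
      rw [hFk]
      calc F a k * (1 - X ^ (a*(k+1))) * F a (n-k) * (X ^ (a*(n-k)) * gb a n k)
          = X ^ (a*(n-k)) * ((1 - X ^ (a*(k+1))) * (F a k * F a (n-k) * gb a n k)) := by ring
        _ = _ := by rw [gb_mul a n k hk]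
    rw [h1, h2, F_succ]
    have hX : (X:PS) ^ (a*(n-k)) * X ^ (a*(k+1)) = X ^ (a*(n+1)) :=
      X_pow_prod_eq _ _ _ (mul_eq_of_plus a (by omega))
    linear_combination (F a n) * hX

/-- ratio identity. -/
lemma gb_ratio (a : ℕ) (ha : 1 ≤ a) (n k : ℕ) (hk : k+1 ≤ n) :
    (1 - X ^ (a*(k+1))) * gb a n (k+1) = (1 - X ^ (a*(n-k))) * gb a n k := by
  have hne : F a k * F a (n-(k+1)) ≠ 0 :=
    mul_ne_zero (F_ne_zero _ _ ha) (F_ne_zero _ _ ha)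
  apply mul_left_cancel₀ hne
  have hnk2 : n-k = (n-(k+1))+1 := by omega
  have hF : F a (n-k) = F a (n-(k+1)) * (1 - X^(a*(n-k))) := by
    have := F_succ a (n-(k+1))
    rw [← hnk2] at this
    exact this
  have hFk : F a (k+1) = F a k * (1 - X ^ (a*(k+1))) := F_succ a k
  have h1 : F a k * F a (n-(k+1)) * ((1 - X ^ (a*(k+1))) * gb a n (k+1)) = F a n := by
    calc F a k * F a (n-(k+1)) * ((1 - X ^ (a*(k+1))) * gb a n (k+1))
        = (F a k * (1 - X ^ (a*(k+1)))) * F a (n-(k+1)) * gb a n (k+1) := by ring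
      _ = F a (k+1) * F a (n-(k+1)) * gb a n (k+1) := by rw [← hFk]
      _ = F a n := gb_mul a n (k+1) hk
  have h2 : F a k * F a (n-(k+1)) * ((1 - X ^ (a*(n-k))) * gb a n k) = F a n := by
    calc F a k * F a (n-(k+1)) * ((1 - X ^ (a*(n-k))) * gb a n k)
        = F a k * (F a (n-(k+1)) * (1 - X ^ (a*(n-k)))) * gb a n k := by ring
      _ = F a k * F a (n-k) * gb a n k := by rw [← hF]
      _ = F a n := gb_mul a n k (by omega)
  rw [h1, h2]
variable (a : ℕ)

/-- `gb` with integer second argument (zero out of range). -/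
def Bz (a n : ℕ) (k : ℤ) : PS := if 0 ≤ k then gb a n k.toNat else 0

lemma Bz_of_nonneg (n : ℕ) {k : ℤ} (h : 0 ≤ k) : Bz a n k = gb a n k.toNat := if_pos h
lemma Bz_neg (n : ℕ) {k : ℤ} (h : k < 0) : Bz a n k = 0 := if_neg (by omega)
lemma Bz_big {n : ℕ} {k : ℤ} (h : (n:ℤ) < k) : Bz a n k = 0 := by
  rw [Bz, if_pos (by omega), gb_eq_zero a (by omega)]
@[simp] lemma Bz_zero (n : ℕ) : Bz a n 0 = 1 := by rw [Bz, if_pos le_rfl]; simp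
lemma Bz_diag (n : ℕ) : Bz a n n = 1 := by
  rw [Bz, if_pos (by positivity), Int.toNat_natCast, gb_diag]

/-- integer-index q-Pascal I. -/
lemma Bz_pascal1 (ha : 1 ≤ a) (n : ℕ) (k : ℤ) :
    Bz a (n+1) k = Bz a n k + X ^ (a * ((n:ℤ)+1-k).toNat) * Bz a n (k-1) := by
  rcases lt_trichotomy k 0 with hk | hk | hk
  · rw [Bz_neg a _ hk, Bz_neg a _ hk, Bz_neg a _ (by omega : k - 1 < 0), mul_zero, add_zero]
  · subst hk
    rw [Bz_zero, Bz_zero, Bz_neg a _ (by omega : (0:ℤ) - 1 < 0), mul_zero, add_zero]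
  · obtain ⟨k', rfl⟩ : ∃ k' : ℕ, k = (k' : ℤ) + 1 := ⟨(k-1).toNat, by omega⟩
    have h1 : ((k' : ℤ) + 1).toNat = k' + 1 := by omega
    have h2 : ((k' : ℤ) + 1 - 1) = (k' : ℤ) := by ring
    rw [Bz_of_nonneg a (n+1) (by omega : (0:ℤ) ≤ (k':ℤ)+1),
        Bz_of_nonneg a n (by omega : (0:ℤ) ≤ (k':ℤ)+1), h2,
        Bz_of_nonneg a n (by omega : (0:ℤ) ≤ (k':ℤ)), h1, Int.toNat_natCast]
    rcases le_or_gt (k'+1) (n+1) with hkn | hkn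
    · have h3 : ((n:ℤ)+1-((k':ℤ)+1)).toNat = n - k' := by omega
      rw [h3]
      exact gb_pascal1 a ha n k' (by omega)
    · rw [gb_eq_zero a (by omega), gb_eq_zero a (by omega), gb_eq_zero a (by omega),
        mul_zero, add_zero]

/-- integer-index q-Pascal II. -/
lemma Bz_pascal2 (n : ℕ) (k : ℤ) :
    Bz a (n+1) k = X ^ (a * k.toNat) * Bz a n k + Bz a n (k-1) := by
  rcases lt_trichotomy k 0 with hk | hk | hk
  · rw [Bz_neg a _ hk, Bz_neg a _ hk, Bz_neg a _ (by omega : k - 1 < 0), mul_zero, add_zero]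
  · subst hk
    rw [Bz_zero, Bz_zero, Bz_neg a _ (by omega : (0:ℤ) - 1 < 0), Int.toNat_zero, Nat.mul_zero,
      pow_zero, mul_one, add_zero]
  · obtain ⟨k', rfl⟩ : ∃ k' : ℕ, k = (k' : ℤ) + 1 := ⟨(k-1).toNat, by omega⟩
    have h1 : ((k' : ℤ) + 1).toNat = k' + 1 := by omega
    have h2 : ((k' : ℤ) + 1 - 1) = (k' : ℤ) := by ring
    rw [Bz_of_nonneg a (n+1) (by omega : (0:ℤ) ≤ (k':ℤ)+1),
        Bz_of_nonneg a n (by omega : (0:ℤ) ≤ (k':ℤ)+1), h2,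
        Bz_of_nonneg a n (by omega : (0:ℤ) ≤ (k':ℤ)), h1, Int.toNat_natCast]
    rcases le_or_gt (k'+1) (n+1) with hkn | hkn
    · rw [gb_succ, add_comm]
    · rw [gb_eq_zero a (by omega), gb_eq_zero a (by omega), gb_eq_zero a (by omega),
        mul_zero, add_zero]

/-- integer-index ratio identity. -/
lemma Bz_ratio (ha : 1 ≤ a) (n : ℕ) (k : ℤ) :
    (1 - X ^ (a * k.toNat)) * Bz a n k = (1 - X ^ (a * ((n:ℤ)+1-k).toNat)) * Bz a n (k-1) := by
  rcases lt_trichotomy k 0 with hk | hk | hk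
  · rw [Bz_neg a _ hk, Bz_neg a _ (by omega : k - 1 < 0), mul_zero, mul_zero]
  · subst hk
    rw [Bz_neg a _ (by omega : (0:ℤ) - 1 < 0), Int.toNat_zero, Nat.mul_zero, pow_zero,
      sub_self, zero_mul, mul_zero]
  · obtain ⟨k', rfl⟩ : ∃ k' : ℕ, k = (k' : ℤ) + 1 := ⟨(k-1).toNat, by omega⟩
    have h1 : ((k' : ℤ) + 1).toNat = k' + 1 := by omega
    have h2 : ((k' : ℤ) + 1 - 1) = (k' : ℤ) := by ring
    rw [h2, Bz_of_nonneg a n (by omega : (0:ℤ) ≤ (k':ℤ)+1),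
        Bz_of_nonneg a n (by omega : (0:ℤ) ≤ (k':ℤ)), h1, Int.toNat_natCast]
    rcases le_or_gt (k'+1) n with hkn | hkn
    · have h3 : ((n:ℤ)+1-((k':ℤ)+1)).toNat = n - k' := by omega
      rw [h3]
      exact gb_ratio a ha n k' hkn
    · rw [gb_eq_zero a (by omega : n < k'+1)]
      rcases eq_or_lt_of_le (Nat.succ_le_of_lt hkn) with h4 | h4
      · have h5 : ((n:ℤ)+1-((k':ℤ)+1)).toNat = 0 := by omega
        rw [h5, Nat.mul_zero, pow_zero, sub_self, zero_mul, mul_zero]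
      · rw [gb_eq_zero a (by omega : n < k'), mul_zero, mul_zero]

/-- `X` to an integer power (junk value `toNat` for negatives). -/
def XZ (z : ℤ) : PS := X ^ z.toNat

lemma XZ_add {z w : ℤ} (hz : 0 ≤ z) (hw : 0 ≤ w) : XZ (z + w) = XZ z * XZ w := by
  rw [XZ, XZ, XZ, X_pow_mul_X_pow]
  congr 1
  omega

/- ------------ congruence toolkit ------------- -/

lemma cg_coeff {N : ℕ} {f g : PS} (h : (X:PS)^(N+1) ∣ f - g) :
    (coeff (R := ℚ) N) f = (coeff (R := ℚ) N) g := by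
  have := PowerSeries.X_pow_dvd_iff.mp h N (by omega)
  rw [map_sub, sub_eq_zero] at this
  exact this

lemma cg_mul {M : ℕ} {f g f' g' : PS} (h : (X:PS)^M ∣ f - g) (h' : (X:PS)^M ∣ f' - g') :
    (X:PS)^M ∣ f * f' - g * g' := by
  have : f * f' - g * g' = f * (f' - g') + (f - g) * g' := by ring
  rw [this]
  exact dvd_add (Dvd.dvd.mul_left h' f) (Dvd.dvd.mul_right h g')

lemma cg_sum {M : ℕ} {ι : Type*} (s : Finset ι) (f g : ι → PS)
    (h : ∀ i ∈ s, (X:PS)^M ∣ f i - g i) :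
    (X:PS)^M ∣ (∑ i ∈ s, f i) - (∑ i ∈ s, g i) := by
  rw [← Finset.sum_sub_distrib]
  exact Finset.dvd_sum h

lemma cg_pow_dvd {M e : ℕ} (h : M ≤ e) (f : PS) : (X:PS)^M ∣ X^e * f :=
  Dvd.dvd.mul_right (pow_dvd_pow X h) f

lemma cg_inv {M : ℕ} {f g : PS} (hf : constantCoeff (R := ℚ) f = 1) (hg : constantCoeff (R := ℚ) g = 1)
    (h : (X:PS)^M ∣ f - g) : (X:PS)^M ∣ f⁻¹ - g⁻¹ := by
  have hf' : f⁻¹ * f = 1 := PowerSeries.inv_mul_cancel _ (by rw [hf]; exact one_ne_zero)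
  have hg' : g⁻¹ * g = 1 := PowerSeries.inv_mul_cancel _ (by rw [hg]; exact one_ne_zero)
  have key : f⁻¹ - g⁻¹ = f⁻¹ * g⁻¹ * (g - f) := by
    calc f⁻¹ - g⁻¹ = f⁻¹ * (g⁻¹ * g) - (f⁻¹ * f) * g⁻¹ := by rw [hf', hg']; ring
      _ = f⁻¹ * g⁻¹ * (g - f) := by ring
  rw [key]
  exact Dvd.dvd.mul_left (dvd_sub_comm.mp h) _

lemma cg_prod_one {M : ℕ} {ι : Type*} (s : Finset ι) (f : ι → PS)
    (h : ∀ i ∈ s, (X:PS)^M ∣ f i - 1) :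
    (X:PS)^M ∣ (∏ i ∈ s, f i) - 1 := by
  classical
  induction s using Finset.induction_on with
  | empty => simp
  | @insert j s hj ih =>
    rw [Finset.prod_insert hj]
    have hfj := h j (Finset.mem_insert_self _ _)
    have hs := ih (fun i hi => h i (Finset.mem_insert_of_mem hi))
    have : f j * ∏ i ∈ s, f i - 1 = f j * ((∏ i ∈ s, f i) - 1) + (f j - 1) := by ring
    rw [this]
    exact dvd_add (Dvd.dvd.mul_left hs _) hfj

lemma F_congr (ha : 1 ≤ a) {m m' : ℕ} (h : m ≤ m') :
    (X:PS)^(a*m+a) ∣ F a m' - F a m := by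
  have hsplit : F a m' = F a m * ∏ i ∈ Finset.Ico m m', (1 - (X:PS) ^ (a*(i+1))) := by
    rw [F, F, Finset.range_eq_Ico, ← Finset.prod_Ico_consecutive _ (Nat.zero_le m) h,
      ← Finset.range_eq_Ico]
  rw [hsplit]
  have : F a m * ∏ i ∈ Finset.Ico m m', (1 - (X:PS) ^ (a*(i+1))) - F a m
      = F a m * ((∏ i ∈ Finset.Ico m m', (1 - (X:PS) ^ (a*(i+1)))) - 1) := by ring
  rw [this]
  apply Dvd.dvd.mul_left
  apply cg_prod_one
  intro i hi
  rw [Finset.mem_Ico] at hi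
  have : (1 : PS) - X ^ (a*(i+1)) - 1 = -(X^(a*(i+1)) * 1) := by ring
  rw [this]
  apply dvd_neg.mpr
  apply cg_pow_dvd
  calc a*m+a = a*(m+1) := by ring
    _ ≤ a*(i+1) := Nat.mul_le_mul_left a (by omega)

lemma gb_congr (ha : 1 ≤ a) {n k : ℕ} (h : k ≤ n) :
    (X:PS)^(a*(n-k)+a) ∣ gb a n k - (F a k)⁻¹ := by
  have hgb : gb a n k = (F a k)⁻¹ * (F a (n-k))⁻¹ * F a n := by
    have h1 := gb_mul a n k h
    have h2 : (F a k)⁻¹ * (F a (n-k))⁻¹ * (F a k * F a (n-k) * gb a n k)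
        = gb a n k := by
      calc (F a k)⁻¹ * (F a (n-k))⁻¹ * (F a k * F a (n-k) * gb a n k)
          = ((F a k)⁻¹ * F a k) * ((F a (n-k))⁻¹ * F a (n-k)) * gb a n k := by ring
        _ = gb a n k := by rw [F_inv_mul a k ha, F_inv_mul a (n-k) ha]; ring
    rw [← h2, h1]
  have hkey : gb a n k - (F a k)⁻¹ = (F a k)⁻¹ * (F a (n-k))⁻¹ * (F a n - F a (n-k)) := by
    rw [hgb]
    have : (F a k)⁻¹ * (F a (n-k))⁻¹ * F a (n-k) = (F a k)⁻¹ := by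
      calc (F a k)⁻¹ * (F a (n-k))⁻¹ * F a (n-k)
          = (F a k)⁻¹ * ((F a (n-k))⁻¹ * F a (n-k)) := by ring
        _ = (F a k)⁻¹ := by rw [F_inv_mul a (n-k) ha, mul_one]
    rw [mul_sub, this]
  rw [hkey]
  exact Dvd.dvd.mul_left (F_congr a ha (by omega)) _
/- ------------ the Schur polynomials ------------- -/

/-- sign `(-1)^j`. -/
def sg (j : ℤ) : PS := if Even j then 1 else -1

lemma sg_succ (j : ℤ) : sg (j+1) = - sg j := by
  rcases Int.even_or_odd j with h | h
  · have h1 : ¬ Even (j+1) := by rw [Int.even_add_one]; exact fun h' => h' h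
    simp [sg, h, h1]
  · have h0 : ¬ Even j := Int.not_even_iff_odd.2 h
    have h1 : Even (j+1) := Int.even_add_one.2 h0
    simp [sg, h0, h1]

/-- exponent `j(5j+3)/2`. -/
def cz (j : ℤ) : ℤ := j*(5*j+3)/2

lemma cz_two (j : ℤ) : 2 * cz j = 5*j^2 + 3*j := by
  obtain ⟨t, ht⟩ : Even (j*(j+1)) := Int.even_mul_succ_self j
  have h2 : j*(5*j+3) = 2*(5*t-j) := by linear_combination 5*ht
  rw [cz, h2, Int.mul_ediv_cancel_left _ (by norm_num)]
  linear_combination (-5)*ht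

lemma cz_nonneg (j : ℤ) : 0 ≤ cz j := by
  have h := cz_two j
  rcases le_or_gt 0 j with hj | hj
  · nlinarith [sq_nonneg j]
  · nlinarith [sq_nonneg j, mul_nonneg (by omega : (0:ℤ) ≤ -j) (by omega : (0:ℤ) ≤ -j-1)]

lemma cz_succ (j : ℤ) : cz (j+1) = cz j + 5*j + 4 := by
  have key : 2*cz (j+1) = 2*(cz j + 5*j + 4) := by
    linear_combination cz_two (j+1) - cz_two j
  linarith

lemma abs_le_cz (j : ℤ) : |j| ≤ cz j := by
  have h := cz_two j
  rcases le_or_gt 0 j with hj | hj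
  · rw [abs_of_nonneg hj]; nlinarith [sq_nonneg j]
  · rw [abs_of_neg hj]
    nlinarith [mul_nonneg (by omega : (0:ℤ) ≤ -j) (by omega : (0:ℤ) ≤ -j-1)]

/-- floor((n-5j)/2). -/
def fl (n : ℕ) (j : ℤ) : ℤ := ((n:ℤ) - 5*j)/2

/-- term of the Schur alternating sum. -/
def T (n : ℕ) (j : ℤ) : PS := sg j * (XZ (cz j) * Bz 1 (n+1) (fl n j))

def E (n : ℕ) : PS := ∑ j ∈ Finset.Icc (-(n:ℤ)-1) ((n:ℤ)+1), T n j

def e (n : ℕ) : PS := ∑ k ∈ Finset.range (n+1), X^(k^2+k) * Bz 1 (n-k) (k:ℤ)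

lemma T_eq_zero (n : ℕ) {j : ℤ} (h : 5*j ≥ (n:ℤ)+1 ∨ 5*j ≤ -((n:ℤ)+4)) : T n j = 0 := by
  rcases h with h | h
  · have : fl n j < 0 := by rw [fl]; omega
    rw [T, Bz_neg 1 _ this, mul_zero, mul_zero]
  · have : ((n:ℤ)+1) < fl n j := by rw [fl]; omega
    rw [T, Bz_big 1 (by exact_mod_cast this), mul_zero, mul_zero]

/-- the telescoping witness for the Schur recurrence. -/
def w (n : ℕ) (j : ℤ) : PS :=
  if (2 : ℤ) ∣ ((n:ℤ)+2 - 5*j) then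
    sg j * (XZ (cz j + ((n:ℤ)+2-5*j)/2) * Bz 1 (n+1) (((n:ℤ)+2-5*j)/2))
  else 0

/-- The per-index Schur telescoping identity. -/
lemma T_step (n : ℕ) (j : ℤ) :
    T (n+2) j - T (n+1) j - X^(n+2) * T n j = w n j - w n (j+1) := by
  have hcz := cz_nonneg j
  have hcz1 := cz_nonneg (j+1)
  have hczs := cz_succ j
  rcases Int.even_or_odd ((n:ℤ)+2-5*j) with ⟨k, hk⟩ | ⟨k, hk⟩
  · -- even case : n+2-5j = 2k
    have hfl2 : fl (n+2) j = k := by rw [fl]; omega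
    have hfl1 : fl (n+1) j = k - 1 := by rw [fl]; omega
    have hfl0 : fl n j = k - 1 := by rw [fl]; omega
    have hwj : w n j = sg j * (XZ (cz j + k) * Bz 1 (n+1) k) := by
      rw [w, if_pos (by omega : (2:ℤ) ∣ ((n:ℤ)+2-5*j))]
      congr 2 <;> rw [show ((n:ℤ)+2-5*j) = 2*k by omega, Int.mul_ediv_cancel_left _ (by norm_num)]
    have hwj1 : w n (j+1) = 0 := by
      rw [w, if_neg]; omega
    rw [hwj, hwj1, sub_zero, T, T, T, hfl2, hfl1, hfl0]
    have hp2 : Bz 1 (n+3) k = X^(1 * k.toNat) * Bz 1 (n+2) k + Bz 1 (n+2) (k-1) :=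
      Bz_pascal2 1 (n+2) k
    have hp1 : Bz 1 (n+2) k
        = Bz 1 (n+1) k + X^(1 * (((n+1:ℕ):ℤ)+1-k).toNat) * Bz 1 (n+1) (k-1) :=
      Bz_pascal1 1 le_rfl (n+1) k
    rw [one_mul] at hp2
    rw [one_mul] at hp1
    have hcast : ((((n+1:ℕ)):ℤ)+1-k) = ((n:ℤ)+2-k) := by push_cast; ring
    rw [hcast] at hp1
    have hA : XZ (cz j) * X^(k.toNat) * Bz 1 (n+1) k = XZ (cz j + k) * Bz 1 (n+1) k := by
      rcases le_or_gt 0 k with hk0 | hk0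
      · rw [XZ_add hcz hk0]; simp only [XZ]
      · rw [Bz_neg 1 _ hk0, mul_zero, mul_zero]
    have hB : X^(k.toNat) * X^(((n:ℤ)+2-k).toNat) * Bz 1 (n+1) (k-1)
        = X^(n+2) * Bz 1 (n+1) (k-1) := by
      rcases lt_trichotomy k 0 with hk0 | hk0 | hk0
      · rw [Bz_neg 1 _ (by omega : k-1 < 0), mul_zero, mul_zero]
      · subst hk0
        rw [Bz_neg 1 _ (by omega : (0:ℤ)-1 < 0), mul_zero, mul_zero]
      · rcases le_or_gt k ((n:ℤ)+2) with hk2 | hk2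
        · rw [X_pow_mul_X_pow]
          congr 2
          omega
        · rw [Bz_big 1 (by push_cast; omega : ((n+1:ℕ):ℤ) < k - 1), mul_zero, mul_zero]
    rw [hp2, hp1]
    linear_combination (sg j) * hA + (sg j * XZ (cz j)) * hB
  · -- odd case : n+2-5j = 2k+1
    have hfl2 : fl (n+2) j = k := by rw [fl]; omega
    have hfl1 : fl (n+1) j = k := by rw [fl]; omega
    have hfl0 : fl n j = k - 1 := by rw [fl]; omega
    have hwj : w n j = 0 := by rw [w, if_neg]; omega
    have hwj1 : w n (j+1) = - (sg j * (XZ (cz (j+1) + (k-2)) * Bz 1 (n+1) (k-2))) := by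
      rw [w, if_pos (by omega : (2:ℤ) ∣ ((n:ℤ)+2-5*(j+1)))]
      rw [sg_succ]
      have : ((n:ℤ)+2-5*(j+1))/2 = k - 2 := by omega
      rw [this]
      ring
    rw [hwj, hwj1, zero_sub, neg_neg, T, T, T, hfl2, hfl1, hfl0]
    have hp1 : Bz 1 (n+3) k
        = Bz 1 (n+2) k + X^(1 * (((n+2:ℕ):ℤ)+1-k).toNat) * Bz 1 (n+2) (k-1) :=
      Bz_pascal1 1 le_rfl (n+2) k
    have hp2 : Bz 1 (n+2) (k-1) = X^(1 * (k-1).toNat) * Bz 1 (n+1) (k-1) + Bz 1 (n+1) (k-1-1) :=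
      Bz_pascal2 1 (n+1) (k-1)
    rw [one_mul] at hp1
    rw [one_mul] at hp2
    have hcast : ((((n+2:ℕ)):ℤ)+1-k) = ((n:ℤ)+3-k) := by push_cast; ring
    rw [hcast] at hp1
    have hkk : k - 1 - 1 = k - 2 := by ring
    rw [hkk] at hp2
    have hC : X^(((n:ℤ)+3-k).toNat) * X^((k-1).toNat) * Bz 1 (n+1) (k-1)
        = X^(n+2) * Bz 1 (n+1) (k-1) := by
      rcases le_or_gt k 0 with hk0 | hk0
      · rw [Bz_neg 1 _ (by omega : k-1 < 0), mul_zero, mul_zero]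
      · rcases le_or_gt k ((n:ℤ)+3) with hk2 | hk2
        · rw [X_pow_mul_X_pow]
          congr 2
          omega
        · rw [Bz_big 1 (by push_cast; omega : ((n+1:ℕ):ℤ) < k - 1), mul_zero, mul_zero]
    have hD : XZ (cz j) * X^(((n:ℤ)+3-k).toNat) * Bz 1 (n+1) (k-2)
        = XZ (cz (j+1) + (k-2)) * Bz 1 (n+1) (k-2) := by
      rcases le_or_gt k 1 with hk0 | hk0
      · rw [Bz_neg 1 _ (by omega : k-2 < 0), mul_zero, mul_zero]
      · rcases le_or_gt k ((n:ℤ)+3) with hk2 | hk2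
        · have : XZ (cz j) * X^(((n:ℤ)+3-k).toNat) = XZ (cz (j+1) + (k-2)) := by
            rw [XZ, XZ, X_pow_mul_X_pow]
            congr 1
            omega
          rw [this]
        · rw [Bz_big 1 (by push_cast; omega : ((n+1:ℕ):ℤ) < k - 2), mul_zero, mul_zero]
    rw [hp1, hp2]
    linear_combination (sg j * XZ (cz j)) * hC + (sg j) * hD

lemma sum_shift (w : ℤ → PS) (aa bb : ℤ) :
    ∑ j ∈ Finset.Icc aa bb, w (j+1) = ∑ j ∈ Finset.Icc (aa+1) (bb+1), w j := by
  apply Finset.sum_nbij' (fun i => i+1) (fun i => i-1) <;>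
    intros <;> simp_all [Finset.mem_Icc] <;> omega

lemma telescope (w : ℤ → PS) (aa bb : ℤ) (h : aa ≤ bb+1)
    (ha : w aa = 0) (hb : w (bb+1) = 0) :
    ∑ j ∈ Finset.Icc aa bb, (w j - w (j+1)) = 0 := by
  rw [Finset.sum_sub_distrib, sum_shift]
  have h1 : ∑ j ∈ Finset.Icc aa bb, w j = ∑ j ∈ Finset.Icc aa (bb+1), w j := by
    apply Finset.sum_subset
    · apply Finset.Icc_subset_Icc le_rfl; omega
    · intro x hx hx'
      rw [Finset.mem_Icc] at hx hx'
      have : x = bb+1 := by omega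
      rwa [this]
  have h2 : ∑ j ∈ Finset.Icc (aa+1) (bb+1), w j = ∑ j ∈ Finset.Icc aa (bb+1), w j := by
    apply Finset.sum_subset
    · apply Finset.Icc_subset_Icc _ le_rfl; omega
    · intro x hx hx'
      rw [Finset.mem_Icc] at hx hx'
      have : x = aa := by omega
      rwa [this]
  rw [h1, h2, sub_self]
lemma w_left (n : ℕ) : w n (-(n:ℤ)-3) = 0 := by
  rw [w, if_neg]
  omega

lemma w_right (n : ℕ) : w n ((n:ℤ)+3+1) = 0 := by
  have hK : ((n:ℤ)+2-5*((n:ℤ)+3+1))/2 < 0 := by omega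
  rw [w]
  split_ifs with h
  · rw [Bz_neg 1 _ hK, mul_zero, mul_zero]
  · rfl

lemma E_eq_sum_big (m : ℕ) {b : ℕ} (hb : m + 1 ≤ b) :
    E m = ∑ j ∈ Finset.Icc (-(b:ℤ)) (b:ℤ), T m j := by
  rw [E]
  apply Finset.sum_subset
  · apply Finset.Icc_subset_Icc <;> omega
  · intro x hx hx'
    rw [Finset.mem_Icc] at hx hx'
    apply T_eq_zero
    omega

lemma E_rec (n : ℕ) : E (n+2) = E (n+1) + X^(n+2) * E n := by
  have h2 : E (n+2) = ∑ j ∈ Finset.Icc (-((n:ℤ)+3)) ((n:ℤ)+3), T (n+2) j := by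
    have := E_eq_sum_big (n+2) (b := n+3) (by omega)
    rw [this]
    congr 1 <;> push_cast <;> ring
  have h1 : E (n+1) = ∑ j ∈ Finset.Icc (-((n:ℤ)+3)) ((n:ℤ)+3), T (n+1) j := by
    have := E_eq_sum_big (n+1) (b := n+3) (by omega)
    rw [this]
    congr 1 <;> push_cast <;> ring
  have h0 : E n = ∑ j ∈ Finset.Icc (-((n:ℤ)+3)) ((n:ℤ)+3), T n j := by
    have := E_eq_sum_big n (b := n+3) (by omega)
    rw [this]
    congr 1 <;> push_cast <;> ring
  have key : ∑ j ∈ Finset.Icc (-((n:ℤ)+3)) ((n:ℤ)+3),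
      (T (n+2) j - T (n+1) j - X^(n+2) * T n j) = 0 := by
    have : ∀ j ∈ Finset.Icc (-((n:ℤ)+3)) ((n:ℤ)+3),
        T (n+2) j - T (n+1) j - X^(n+2) * T n j = w n j - w n (j+1) :=
      fun j _ => T_step n j
    rw [Finset.sum_congr rfl this]
    apply telescope _ _ _ (by omega)
    · have : -((n:ℤ)+3) = -(n:ℤ)-3 := by ring
      rw [this]; exact w_left n
    · exact w_right n
  have expand : ∑ j ∈ Finset.Icc (-((n:ℤ)+3)) ((n:ℤ)+3),
      (T (n+2) j - T (n+1) j - X^(n+2) * T n j)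
      = E (n+2) - E (n+1) - X^(n+2) * E n := by
    rw [h2, h1, h0, Finset.mul_sum]
    rw [Finset.sum_sub_distrib, Finset.sum_sub_distrib]
  rw [expand] at key
  linear_combination key

lemma e_rec (n : ℕ) : e (n+2) = e (n+1) + X^(n+2) * e n := by
  rw [e]
  rw [Finset.sum_range_succ]
  have hlast : (X:PS)^((n+2)^2+(n+2)) * Bz 1 (n+2-(n+2)) ((n+2 : ℕ) : ℤ) = 0 := by
    rw [Nat.sub_self, Bz_big 1 (by push_cast; omega : ((0:ℕ):ℤ) < ((n+2:ℕ):ℤ)), mul_zero]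
  rw [hlast, add_zero]
  have hterm : ∀ k ∈ Finset.range (n+2),
      (X:PS)^(k^2+k) * Bz 1 (n+2-k) (k : ℤ)
      = X^(k^2+k) * Bz 1 (n+1-k) (k:ℤ)
        + X^(k^2+k) * (X^((((n+1-k:ℕ)):ℤ)+1-(k:ℤ)).toNat * Bz 1 (n+1-k) ((k:ℤ)-1)) := by
    intro k hk
    rw [Finset.mem_range] at hk
    have hs : n+2-k = (n+1-k)+1 := by omega
    rw [hs, Bz_pascal1 1 le_rfl (n+1-k) (k:ℤ), one_mul, mul_add]
  rw [Finset.sum_congr rfl hterm, Finset.sum_add_distrib]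
  have he1 : ∑ k ∈ Finset.range (n+2), (X:PS)^(k^2+k) * Bz 1 (n+1-k) (k:ℤ) = e (n+1) := by
    rw [e]
  rw [he1]
  congr 1
  -- second sum equals X^(n+2) * e n
  rw [Finset.sum_range_succ']
  have h0 : (X:PS)^(0^2+0) * (X^((((n+1-0:ℕ)):ℤ)+1-((0:ℕ):ℤ)).toNat * Bz 1 (n+1-0) (((0:ℕ):ℤ)-1)) = 0 := by
    rw [Bz_neg 1 _ (by norm_num : ((0:ℕ):ℤ)-1 < 0), mul_zero, mul_zero]
  rw [h0, add_zero, e, Finset.mul_sum]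
  apply Finset.sum_congr rfl
  intro k hk
  rw [Finset.mem_range] at hk
  have hcast : (((k+1:ℕ)):ℤ) - 1 = (k:ℤ) := by push_cast; ring
  rw [hcast]
  have hsub : n+1-(k+1) = n-k := by omega
  rw [hsub]
  rcases le_or_gt (2*k) n with h2k | h2k
  · have hexp : ((((n-k:ℕ)):ℤ)+1-(((k+1:ℕ)):ℤ)).toNat = n-2*k := by omega
    rw [hexp]
    rw [show (X:PS)^((k+1)^2+(k+1)) * (X^(n-2*k) * Bz 1 (n-k) (k:ℤ))
        = (X^((k+1)^2+(k+1)) * X^(n-2*k)) * Bz 1 (n-k) (k:ℤ) from by ring,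
      X_pow_mul_X_pow,
      show (X:PS)^(n+2) * (X^(k^2+k) * Bz 1 (n-k) (k:ℤ))
        = (X^(n+2) * X^(k^2+k)) * Bz 1 (n-k) (k:ℤ) from by ring,
      X_pow_mul_X_pow]
    congr 2
    ring_nf
    omega
  · have hzero : Bz 1 (n-k) (k:ℤ) = 0 := Bz_big 1 (by omega : ((n-k:ℕ):ℤ) < (k:ℤ))
    rw [hzero, mul_zero, mul_zero, mul_zero, mul_zero]

lemma e_zero : e 0 = 1 := by
  rw [e]
  simp

lemma e_one : e 1 = 1 := by
  rw [e, Finset.sum_range_succ, Finset.sum_range_succ, Finset.sum_range_zero]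
  rw [Bz_big 1 (by norm_num : ((1-1:ℕ):ℤ) < ((1:ℕ):ℤ))]
  norm_num

lemma T_zero_eval (n : ℕ) (h : fl n 0 = 0) : T n 0 = 1 := by
  rw [T, h, Bz_zero, mul_one]
  have hsg : sg 0 = 1 := by norm_num [sg]
  have hcz : cz 0 = 0 := by norm_num [cz]
  rw [hsg, hcz, one_mul, XZ, Int.toNat_zero, pow_zero]

lemma E_zero : E 0 = 1 := by
  rw [E]
  have hIcc : Finset.Icc (-((0:ℕ):ℤ)-1) (((0:ℕ):ℤ)+1) = {-1, 0, 1} := by decide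
  rw [hIcc]
  rw [show ({-1, 0, 1} : Finset ℤ) = insert (-1) (insert 0 {1}) from rfl]
  rw [Finset.sum_insert (by decide), Finset.sum_insert (by decide), Finset.sum_singleton]
  rw [T_eq_zero 0 (j := -1) (Or.inr (by norm_num)), T_eq_zero 0 (j := 1) (Or.inl (by norm_num)),
    T_zero_eval 0 (by norm_num [fl])]
  ring

lemma E_one : E 1 = 1 := by
  rw [E]
  have hIcc : Finset.Icc (-((1:ℕ):ℤ)-1) (((1:ℕ):ℤ)+1) = {-2, -1, 0, 1, 2} := by decide
  rw [hIcc]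
  rw [show ({-2, -1, 0, 1, 2} : Finset ℤ)
    = insert (-2) (insert (-1) (insert 0 (insert 1 {2}))) from rfl]
  rw [Finset.sum_insert (by decide), Finset.sum_insert (by decide),
    Finset.sum_insert (by decide), Finset.sum_insert (by decide), Finset.sum_singleton]
  rw [T_eq_zero 1 (j := -2) (Or.inr (by norm_num)), T_eq_zero 1 (j := -1) (Or.inr (by norm_num)),
    T_eq_zero 1 (j := 1) (Or.inl (by norm_num)), T_eq_zero 1 (j := 2) (Or.inl (by norm_num)),
    T_zero_eval 1 (by norm_num [fl])]
  ring

lemma e_eq_E : ∀ n, e n = E n := by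
  have key : ∀ n, e n = E n ∧ e (n+1) = E (n+1) := by
    intro n
    induction n with
    | zero => exact ⟨by rw [e_zero, E_zero], by rw [e_one, E_one]⟩
    | succ n ih => exact ⟨ih.2, by rw [e_rec, E_rec, ih.1, ih.2]⟩
  exact fun n => (key n).1
/- ------------ finite Jacobi triple product ------------- -/

def S5 (m : ℕ) (j : ℤ) : PS := sg j * (XZ (cz j) * Bz 5 (2*m) ((m:ℤ)+j))

def v5 (m : ℕ) (j : ℤ) : PS :=
  sg j * (XZ (cz j + 5*((m:ℤ)+1-j)) * Bz 5 (2*m) ((m:ℤ)+j-1))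

def Jsum (m : ℕ) : PS := ∑ j ∈ Finset.Icc (-(m:ℤ)-1) ((m:ℤ)+1), S5 m j

def P14 (m : ℕ) : PS := ∏ i ∈ Finset.range m, ((1 - (X:PS)^(5*i+1)) * (1 - (X:PS)^(5*i+4)))

lemma S5_eq_zero (m : ℕ) {j : ℤ} (h : j ≤ -((m:ℤ)+1) ∨ (m:ℤ)+1 ≤ j) : S5 m j = 0 := by
  rcases h with h | h
  · rw [S5, Bz_neg 5 _ (by omega : (m:ℤ)+j < 0), mul_zero, mul_zero]
  · rw [S5, Bz_big 5 (by push_cast; omega : ((2*m:ℕ):ℤ) < (m:ℤ)+j), mul_zero, mul_zero]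

lemma v5_left (m : ℕ) : v5 m (-(m:ℤ)-2) = 0 := by
  rw [v5, Bz_neg 5 _ (by omega : (m:ℤ)+(-(m:ℤ)-2)-1 < 0), mul_zero, mul_zero]

lemma v5_right (m : ℕ) : v5 m ((m:ℤ)+2+1) = 0 := by
  rw [v5, Bz_big 5 (by push_cast; omega : ((2*m:ℕ):ℤ) < (m:ℤ)+((m:ℤ)+2+1)-1), mul_zero, mul_zero]

lemma Jsum_eq (m b1 b2 : ℕ) (h1 : m+1 ≤ b1) (h2 : m+1 ≤ b2) :
    Jsum m = ∑ j ∈ Finset.Icc (-(b1:ℤ)) (b2:ℤ), S5 m j := by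
  rw [Jsum]
  apply Finset.sum_subset
  · apply Finset.Icc_subset_Icc <;> omega
  · intro x hx hx'
    rw [Finset.mem_Icc] at hx hx'
    apply S5_eq_zero
    omega

/-- per-index step for the finite Jacobi triple product. -/
lemma S5_step (m : ℕ) (j : ℤ) :
    S5 (m+1) j - S5 m j + X^(5*m+1) * S5 m (j+1) + X^(5*m+4) * S5 m j
      - X^(10*m+5) * S5 m j
    = v5 m j - v5 m (j+1) := by
  have hcz := cz_nonneg j
  have hcz1 := cz_nonneg (j+1)
  have hczs := cz_succ j
  have hc1 : ((m+1:ℕ):ℤ) + j = (m:ℤ)+1+j := by push_cast; ring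
  simp only [S5, v5]
  rw [hc1, show 2*(m+1) = (2*m+1)+1 from by ring]
  rw [show (m:ℤ)+(j+1) = (m:ℤ)+1+j from by ring,
      show cz (j+1) + 5*((m:ℤ)+1-(j+1)) = cz (j+1) + 5*((m:ℤ)-j) from by ring]
  have hp1 : Bz 5 (2*m+1+1) ((m:ℤ)+1+j)
      = Bz 5 (2*m+1) ((m:ℤ)+1+j)
        + X^(5*(((m:ℤ)+1-j)).toNat) * Bz 5 (2*m+1) ((m:ℤ)+1+j-1) := by
    have h := Bz_pascal1 5 (by norm_num) (2*m+1) ((m:ℤ)+1+j)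
    rw [show (((2*m+1:ℕ):ℤ)+1-((m:ℤ)+1+j)) = (m:ℤ)+1-j from by push_cast; ring] at h
    exact h
  have hp2 : Bz 5 (2*m+1) ((m:ℤ)+1+j)
      = X^(5*((m:ℤ)+1+j).toNat) * Bz 5 (2*m) ((m:ℤ)+1+j) + Bz 5 (2*m) ((m:ℤ)+1+j-1) :=
    Bz_pascal2 5 (2*m) ((m:ℤ)+1+j)
  have hp3 : Bz 5 (2*m+1) ((m:ℤ)+j)
      = Bz 5 (2*m) ((m:ℤ)+j) + X^(5*(((m:ℤ)+1-j)).toNat) * Bz 5 (2*m) ((m:ℤ)+j-1) := by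
    have h := Bz_pascal1 5 (by norm_num) (2*m) ((m:ℤ)+j)
    rw [show (((2*m:ℕ):ℤ)+1-((m:ℤ)+j)) = (m:ℤ)+1-j from by push_cast; ring] at h
    exact h
  have hp3' : Bz 5 (2*m+1) ((m:ℤ)+1+j-1)
      = Bz 5 (2*m) ((m:ℤ)+j) + X^(5*(((m:ℤ)+1-j)).toNat) * Bz 5 (2*m) ((m:ℤ)+j-1) := by
    rw [show (m:ℤ)+1+j-1 = (m:ℤ)+j from by ring]; exact hp3
  have hratio : (1 - X^(5*((m:ℤ)+j).toNat)) * Bz 5 (2*m) ((m:ℤ)+j)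
      = (1 - X^(5*(((m:ℤ)+1-j)).toNat)) * Bz 5 (2*m) ((m:ℤ)+j-1) := by
    have h := Bz_ratio 5 (by norm_num) (2*m) ((m:ℤ)+j)
    rw [show (((2*m:ℕ):ℤ)+1-((m:ℤ)+j)) = (m:ℤ)+1-j from by push_cast; ring] at h
    exact h
  have hA : XZ (cz j) * X^(5*((m:ℤ)+1+j).toNat) * Bz 5 (2*m) ((m:ℤ)+1+j)
      = X^(5*m+1) * (XZ (cz (j+1)) * Bz 5 (2*m) ((m:ℤ)+1+j)) := by
    rcases le_or_gt 0 ((m:ℤ)+1+j) with h0 | h0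
    · rw [show XZ (cz j) * X^(5*((m:ℤ)+1+j).toNat) = X^((cz j).toNat + 5*((m:ℤ)+1+j).toNat)
        from by rw [XZ, X_pow_mul_X_pow],
        show (X:PS)^(5*m+1) * (XZ (cz (j+1)) * Bz 5 (2*m) ((m:ℤ)+1+j))
          = X^(5*m+1+(cz (j+1)).toNat) * Bz 5 (2*m) ((m:ℤ)+1+j)
        from by rw [XZ, ← X_pow_mul_X_pow]; ring]
      congr 2
      omega
    · rw [Bz_neg 5 _ h0, mul_zero, mul_zero, mul_zero]
  have hB : X^(5*(((m:ℤ)+1-j)).toNat) * X^(5*((m:ℤ)+j).toNat) * Bz 5 (2*m) ((m:ℤ)+j)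
      = X^(10*m+5) * Bz 5 (2*m) ((m:ℤ)+j) := by
    rcases le_or_gt j (-(m:ℤ)-1) with h0 | h0
    · rw [Bz_neg 5 _ (by omega : (m:ℤ)+j < 0), mul_zero, mul_zero]
    · rcases le_or_gt j ((m:ℤ)+1) with h1 | h1
      · rw [X_pow_mul_X_pow]
        congr 2
        omega
      · rw [Bz_big 5 (by push_cast; omega : ((2*m:ℕ):ℤ) < (m:ℤ)+j), mul_zero, mul_zero]
  have hC : XZ (cz j) * X^(5*(((m:ℤ)+1-j)).toNat) * Bz 5 (2*m) ((m:ℤ)+j-1)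
      = XZ (cz j + 5*((m:ℤ)+1-j)) * Bz 5 (2*m) ((m:ℤ)+j-1) := by
    rcases le_or_gt j ((m:ℤ)+1) with h1 | h1
    · rw [show XZ (cz j) * X^(5*(((m:ℤ)+1-j)).toNat) = XZ (cz j + 5*((m:ℤ)+1-j))
        from by rw [XZ, XZ, X_pow_mul_X_pow]; congr 1; omega]
    · rw [Bz_big 5 (by push_cast; omega : ((2*m:ℕ):ℤ) < (m:ℤ)+j-1), mul_zero, mul_zero]
  have hD : XZ (cz (j+1) + 5*((m:ℤ)-j)) = XZ (cz j) * X^(5*m+4) := by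
    rw [XZ, XZ, X_pow_mul_X_pow]
    congr 1
    omega
  rw [hp1, hp2, hp3', show (m:ℤ)+1+j-1 = (m:ℤ)+j from by ring, sg_succ, hD]
  linear_combination (sg j) * hA + (sg j * XZ (cz j) * X^(5*(((m:ℤ)+1-j)).toNat)) * hratio
    + (sg j * XZ (cz j)) * hB + (sg j) * hC

lemma Jsum_zero : Jsum 0 = 1 := by
  rw [Jsum]
  have hIcc : Finset.Icc (-((0:ℕ):ℤ)-1) (((0:ℕ):ℤ)+1) = {-1, 0, 1} := by decide
  rw [hIcc]
  rw [show ({-1, 0, 1} : Finset ℤ) = insert (-1) (insert 0 {1}) from rfl]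
  rw [Finset.sum_insert (by decide), Finset.sum_insert (by decide), Finset.sum_singleton]
  rw [S5_eq_zero 0 (j := -1) (Or.inl (by norm_num)), S5_eq_zero 0 (j := 1) (Or.inr (by norm_num))]
  rw [S5]
  have hsg : sg 0 = 1 := by norm_num [sg]
  have hcz : cz 0 = 0 := by norm_num [cz]
  rw [hsg, hcz, show ((0:ℕ):ℤ) + 0 = 0 from by norm_num, Bz_zero, XZ]
  norm_num

lemma Jsum_rec (m : ℕ) :
    Jsum (m+1) = (1 - X^(5*m+1)) * ((1 - X^(5*m+4)) * Jsum m) := by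
  have hJ1 : Jsum (m+1) = ∑ j ∈ Finset.Icc (-(m:ℤ)-2) ((m:ℤ)+2), S5 (m+1) j := by
    rw [Jsum]
    congr 1 <;> push_cast <;> ring
  have hJ0 : ∑ j ∈ Finset.Icc (-(m:ℤ)-2) ((m:ℤ)+2), S5 m j = Jsum m := by
    rw [Jsum_eq m (m+2) (m+2) (by omega) (by omega)]
    congr 1 <;> push_cast <;> ring
  have hshift : ∑ j ∈ Finset.Icc (-(m:ℤ)-2) ((m:ℤ)+2), S5 m (j+1) = Jsum m := by
    rw [sum_shift, Jsum_eq m (m+1) (m+3) (by omega) (by omega)]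
    congr 1 <;> push_cast <;> ring
  have key : ∑ j ∈ Finset.Icc (-(m:ℤ)-2) ((m:ℤ)+2),
      (S5 (m+1) j - S5 m j + X^(5*m+1) * S5 m (j+1) + X^(5*m+4) * S5 m j
        - X^(10*m+5) * S5 m j) = 0 := by
    rw [Finset.sum_congr rfl (fun j _ => S5_step m j)]
    apply telescope _ _ _ (by omega)
    · exact v5_left m
    · exact v5_right m
  have expand : ∑ j ∈ Finset.Icc (-(m:ℤ)-2) ((m:ℤ)+2),
      (S5 (m+1) j - S5 m j + X^(5*m+1) * S5 m (j+1) + X^(5*m+4) * S5 m j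
        - X^(10*m+5) * S5 m j)
      = Jsum (m+1) - Jsum m + X^(5*m+1) * Jsum m + X^(5*m+4) * Jsum m
        - X^(10*m+5) * Jsum m := by
    rw [Finset.sum_sub_distrib, Finset.sum_add_distrib, Finset.sum_add_distrib,
      Finset.sum_sub_distrib, ← Finset.mul_sum, ← Finset.mul_sum, ← Finset.mul_sum,
      hJ0, hshift, ← hJ1]
  rw [expand] at key
  have hX : (X:PS)^(5*m+1) * X^(5*m+4) = X^(10*m+5) := X_pow_prod_eq _ _ _ (by ring)
  linear_combination key - hX * Jsum m

lemma Jsum_eq_P14 (m : ℕ) : Jsum m = P14 m := by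
  induction m with
  | zero => rw [Jsum_zero, P14]; simp
  | succ m ih =>
    have hP : P14 (m+1) = P14 m * ((1 - X^(5*m+1)) * (1 - X^(5*m+4))) :=
      Finset.prod_range_succ _ _
    rw [Jsum_rec, ih, hP]
    ring
/- ------------ assembly ------------- -/

lemma cg_sum_subset {M : ℕ} {ι : Type*} {s s' : Finset ι} (h : s ⊆ s') (f : ι → PS)
    (hv : ∀ i ∈ s', i ∉ s → (X:PS)^M ∣ f i) :
    (X:PS)^M ∣ (∑ i ∈ s', f i) - ∑ i ∈ s, f i := by
  classical
  rw [← Finset.sum_sdiff h]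
  have : ∑ i ∈ s' \ s, f i + ∑ i ∈ s, f i - ∑ i ∈ s, f i = ∑ i ∈ s' \ s, f i := by ring
  rw [this]
  apply Finset.dvd_sum
  intro i hi
  rw [Finset.mem_sdiff] at hi
  exact hv i hi.1 hi.2

lemma cg_trans {M : ℕ} {x y z : PS} (h1 : (X:PS)^M ∣ x - y) (h2 : (X:PS)^M ∣ y - z) :
    (X:PS)^M ∣ x - z := by
  have : x - z = (x - y) + (y - z) := by ring
  rw [this]; exact dvd_add h1 h2

lemma dvd_sg_XZ {N : ℕ} {j : ℤ} (h : (N:ℤ) < cz j) (f : PS) :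
    (X:PS)^(N+1) ∣ sg j * (XZ (cz j) * f) := by
  have h1 : (X:PS)^(N+1) ∣ XZ (cz j) := by
    rw [XZ]
    exact pow_dvd_pow X (by omega)
  exact Dvd.dvd.mul_left (Dvd.dvd.mul_right h1 f) (sg j)

/-- Θ_b : truncated theta sum. -/
def Th (b : ℕ) : PS := ∑ j ∈ Finset.Icc (-(b:ℤ)-1) ((b:ℤ)+1), sg j * XZ (cz j)

lemma Th_congr (N : ℕ) {b b' : ℕ} (hb : N ≤ b) (hbb : b ≤ b') :
    (X:PS)^(N+1) ∣ Th b' - Th b := by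
  apply cg_sum_subset (Finset.Icc_subset_Icc (by omega) (by omega))
  intro j hj hj'
  rw [Finset.mem_Icc] at hj hj'
  have habs : (N:ℤ) < cz j := by
    refine lt_of_lt_of_le ?_ (abs_le_cz j)
    rcases abs_cases j with ⟨h1,h2⟩|⟨h1,h2⟩ <;> omega
  have := dvd_sg_XZ habs (1 : PS)
  rwa [mul_one] at this

/-- step (A) : the partial theta-sum of the statement is `e M` mod `X^(N+1)`. -/
lemma step_A (N M : ℕ) (hM : 10*N+10 ≤ M) :
    (X:PS)^(N+1) ∣ e M - ∑ n ∈ Finset.range (N+1), (X:PS)^(n^2+n) * (F 1 n)⁻¹ := by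
  have hbig : (X:PS)^(N+1) ∣ (∑ n ∈ Finset.range (M+1), (X:PS)^(n^2+n) * (F 1 n)⁻¹)
      - ∑ n ∈ Finset.range (N+1), (X:PS)^(n^2+n) * (F 1 n)⁻¹ := by
    apply cg_sum_subset (Finset.range_subset_range.mpr (by omega))
    intro k hk hk'
    rw [Finset.mem_range] at hk hk'
    exact cg_pow_dvd (by nlinarith) _
  apply cg_trans _ hbig
  apply cg_sum
  intro k hk
  rw [Finset.mem_range] at hk
  rcases le_or_gt k N with hkN | hkN
  · have hBz : Bz 1 (M-k) (k:ℤ) = gb 1 (M-k) k := by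
      rw [Bz_of_nonneg 1 _ (by positivity), Int.toNat_natCast]
    rw [hBz]
    have hgb := gb_congr 1 le_rfl (by omega : k ≤ M - k)
    have hdvd : (X:PS)^(N+1) ∣ gb 1 (M-k) k - (F 1 k)⁻¹ :=
      dvd_trans (pow_dvd_pow X (by omega : N+1 ≤ 1*((M-k)-k)+1)) hgb
    have : (X:PS)^(k^2+k) * gb 1 (M-k) k - X^(k^2+k) * (F 1 k)⁻¹
        = X^(k^2+k) * (gb 1 (M-k) k - (F 1 k)⁻¹) := by ring
    rw [this]
    exact Dvd.dvd.mul_left hdvd _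
  · have : (X:PS)^(k^2+k) * Bz 1 (M-k) (k:ℤ) - X^(k^2+k) * (F 1 k)⁻¹
        = X^(k^2+k) * (Bz 1 (M-k) (k:ℤ) - (F 1 k)⁻¹) := by ring
    rw [this]
    exact cg_pow_dvd (by nlinarith) _

/-- step (C) : `E M` is `Th M * (F 1 M)⁻¹` mod `X^(N+1)`. -/
lemma step_C (N M : ℕ) (hM : M = 10*N+10) :
    (X:PS)^(N+1) ∣ E M - Th M * (F 1 M)⁻¹ := by
  rw [E, Th, Finset.sum_mul]
  apply cg_sum
  intro j hj
  rw [Finset.mem_Icc] at hj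
  rcases le_or_gt (cz j) (N:ℤ) with hcz | hcz
  · -- small j : genuine approximation
    have habs : -(N:ℤ) ≤ j ∧ j ≤ (N:ℤ) :=
      abs_le.mp (le_trans (abs_le_cz j) hcz)
    set k : ℤ := fl M j with hk
    have hMz : (M:ℤ) = 10*(N:ℤ)+10 := by rw [hM]; push_cast; ring
    have hk2 : (M:ℤ) - 5*j = 2*k ∨ (M:ℤ) - 5*j = 2*k+1 := by
      rw [hk, fl]; omega
    have hklb : (N:ℤ)+1 ≤ k := by omega
    have hkub : k ≤ (M:ℤ) - 2*(N:ℤ) := by omega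
    have hk0 : 0 ≤ k := by omega
    have hBz : Bz 1 (M+1) (fl M j) = gb 1 (M+1) k.toNat := by
      rw [← hk, Bz_of_nonneg 1 _ hk0]
    have h1 : (X:PS)^(N+1) ∣ gb 1 (M+1) k.toNat - (F 1 k.toNat)⁻¹ := by
      refine dvd_trans (pow_dvd_pow X ?_) (gb_congr 1 le_rfl (by omega : k.toNat ≤ M+1))
      omega
    have h2 : (X:PS)^(N+1) ∣ (F 1 k.toNat)⁻¹ - (F 1 M)⁻¹ := by
      apply cg_inv (constantCoeff_F 1 _ le_rfl) (constantCoeff_F 1 _ le_rfl)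
      apply dvd_sub_comm.mp
      refine dvd_trans (pow_dvd_pow X ?_) (F_congr 1 le_rfl (by omega : k.toNat ≤ M))
      omega
    have h3 : (X:PS)^(N+1) ∣ Bz 1 (M+1) (fl M j) - (F 1 M)⁻¹ := by
      rw [hBz]
      exact cg_trans h1 h2
    have : sg j * (XZ (cz j) * Bz 1 (M+1) (fl M j)) - sg j * XZ (cz j) * (F 1 M)⁻¹
        = (sg j * XZ (cz j)) * (Bz 1 (M+1) (fl M j) - (F 1 M)⁻¹) := by ring
    rw [T, this]
    exact Dvd.dvd.mul_left h3 _
  · apply dvd_sub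
    · rw [T]; exact dvd_sg_XZ hcz _
    · have := dvd_sg_XZ hcz ((F 1 M)⁻¹)
      rwa [← mul_assoc] at this

/-- step (D) : `Th L` is `P14 L * F 5 L` mod `X^(N+1)`. -/
lemma step_D (N L : ℕ) (hL : L = 2*N+2) :
    (X:PS)^(N+1) ∣ P14 L * F 5 L - Th L := by
  have hJ : (X:PS)^(N+1) ∣ Jsum L - Th L * (F 5 L)⁻¹ := by
    rw [Jsum, Th, Finset.sum_mul]
    apply cg_sum
    intro j hj
    rw [Finset.mem_Icc] at hj
    rcases le_or_gt (cz j) (N:ℤ) with hcz | hcz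
    · have habs : -(N:ℤ) ≤ j ∧ j ≤ (N:ℤ) :=
        abs_le.mp (le_trans (abs_le_cz j) hcz)
      have hLz : (L:ℤ) = 2*(N:ℤ)+2 := by rw [hL]; push_cast; ring
      set k : ℤ := (L:ℤ) + j with hk
      have hk0 : 0 ≤ k := by omega
      have hBz : Bz 5 (2*L) ((L:ℤ)+j) = gb 5 (2*L) k.toNat := by
        rw [← hk, Bz_of_nonneg 5 _ hk0]
      have h1 : (X:PS)^(N+1) ∣ gb 5 (2*L) k.toNat - (F 5 k.toNat)⁻¹ := by
        refine dvd_trans (pow_dvd_pow X ?_) (gb_congr 5 (by norm_num) (by omega : k.toNat ≤ 2*L))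
        omega
      have h2 : (X:PS)^(N+1) ∣ (F 5 k.toNat)⁻¹ - (F 5 L)⁻¹ := by
        apply cg_inv (constantCoeff_F 5 _ (by norm_num)) (constantCoeff_F 5 _ (by norm_num))
        rcases le_or_gt k.toNat L with hcmp | hcmp
        · apply dvd_sub_comm.mp
          refine dvd_trans (pow_dvd_pow X ?_) (F_congr 5 (by norm_num) hcmp)
          omega
        · refine dvd_trans (pow_dvd_pow X ?_) (F_congr 5 (by norm_num) (le_of_lt hcmp))
          omega
      have h3 : (X:PS)^(N+1) ∣ Bz 5 (2*L) ((L:ℤ)+j) - (F 5 L)⁻¹ := by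
        rw [hBz]
        exact cg_trans h1 h2
      have : sg j * (XZ (cz j) * Bz 5 (2*L) ((L:ℤ)+j)) - sg j * XZ (cz j) * (F 5 L)⁻¹
          = (sg j * XZ (cz j)) * (Bz 5 (2*L) ((L:ℤ)+j) - (F 5 L)⁻¹) := by ring
      rw [S5, this]
      exact Dvd.dvd.mul_left h3 _
    · apply dvd_sub
      · rw [S5]; exact dvd_sg_XZ hcz _
      · have := dvd_sg_XZ hcz ((F 5 L)⁻¹)
        rwa [← mul_assoc] at this
  have hmul : (X:PS)^(N+1) ∣ (Jsum L - Th L * (F 5 L)⁻¹) * F 5 L :=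
    Dvd.dvd.mul_right hJ _
  have hexp : (Jsum L - Th L * (F 5 L)⁻¹) * F 5 L = Jsum L * F 5 L - Th L := by
    have hinv : (F 5 L)⁻¹ * F 5 L = 1 := F_inv_mul 5 L (by norm_num)
    calc (Jsum L - Th L * (F 5 L)⁻¹) * F 5 L
        = Jsum L * F 5 L - Th L * ((F 5 L)⁻¹ * F 5 L) := by ring
      _ = Jsum L * F 5 L - Th L := by rw [hinv, mul_one]
  rw [hexp] at hmul
  rw [Jsum_eq_P14] at hmul
  exact hmul
/- ------------ splitting the Euler product by residues mod 5 ------------- -/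

lemma F1_split (L : ℕ) :
    F 1 (5*L) = P14 L * ((∏ i ∈ Finset.range L, (1 - (X:PS)^(5*i+2)))
      * ((∏ i ∈ Finset.range L, (1 - (X:PS)^(5*i+3))) * F 5 L)) := by
  induction L with
  | zero => simp [P14]
  | succ L ih =>
    have h5 : 5*(L+1) = 5*L+1+1+1+1+1 := by ring
    rw [h5, F_succ, F_succ, F_succ, F_succ, F_succ]
    have e1 : 1*(5*L+1+1+1+1+1) = 5*L+5 := by ring
    have e2 : 1*(5*L+1+1+1+1) = 5*L+4 := by ring
    have e3 : 1*(5*L+1+1+1) = 5*L+3 := by ring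
    have e4 : 1*(5*L+1+1) = 5*L+2 := by ring
    have e5 : 1*(5*L+1) = 5*L+1 := by ring
    rw [e1, e2, e3, e4, e5, ih]
    have hP : P14 (L+1) = P14 L * ((1 - (X:PS)^(5*L+1)) * (1 - (X:PS)^(5*L+4))) :=
      Finset.prod_range_succ _ _
    have h2 : (∏ i ∈ Finset.range (L+1), (1 - (X:PS)^(5*i+2)))
        = (∏ i ∈ Finset.range L, (1 - (X:PS)^(5*i+2))) * (1 - (X:PS)^(5*L+2)) :=
      Finset.prod_range_succ _ _
    have h3 : (∏ i ∈ Finset.range (L+1), (1 - (X:PS)^(5*i+3)))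
        = (∏ i ∈ Finset.range L, (1 - (X:PS)^(5*i+3))) * (1 - (X:PS)^(5*L+3)) :=
      Finset.prod_range_succ _ _
    have h4 : F 5 (L+1) = F 5 L * (1 - (X:PS)^(5*L+5)) := by
      have := F_succ 5 L
      rwa [show 5*(L+1) = 5*L+5 from by ring] at this
    rw [hP, h2, h3, h4]
    ring

lemma prod_tail (N b : ℕ) (hb : 1 ≤ b) {L' : ℕ} (hL : N+1 ≤ L') :
    (X:PS)^(N+1) ∣ (∏ i ∈ Finset.range L', (1 - (X:PS)^(5*i+b)))
      - ∏ i ∈ Finset.range (N+1), (1 - (X:PS)^(5*i+b)) := by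
  have hsplit : (∏ i ∈ Finset.range L', (1 - (X:PS)^(5*i+b)))
      = (∏ i ∈ Finset.range (N+1), (1 - (X:PS)^(5*i+b)))
        * ∏ i ∈ Finset.Ico (N+1) L', (1 - (X:PS)^(5*i+b)) := by
    rw [Finset.range_eq_Ico, ← Finset.prod_Ico_consecutive _ (Nat.zero_le (N+1)) hL,
      ← Finset.range_eq_Ico]
  rw [hsplit]
  have : (∏ i ∈ Finset.range (N+1), (1 - (X:PS)^(5*i+b)))
        * (∏ i ∈ Finset.Ico (N+1) L', (1 - (X:PS)^(5*i+b)))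
      - (∏ i ∈ Finset.range (N+1), (1 - (X:PS)^(5*i+b)))
      = (∏ i ∈ Finset.range (N+1), (1 - (X:PS)^(5*i+b)))
        * ((∏ i ∈ Finset.Ico (N+1) L', (1 - (X:PS)^(5*i+b))) - 1) := by ring
  rw [this]
  apply Dvd.dvd.mul_left
  apply cg_prod_one
  intro i hi
  rw [Finset.mem_Ico] at hi
  have : (1 : PS) - X^(5*i+b) - 1 = -(X^(5*i+b) * 1) := by ring
  rw [this]
  exact dvd_neg.mpr (cg_pow_dvd (by omega) _)

lemma constantCoeff_prod_one {ι : Type*} (s : Finset ι) (e : ι → ℕ) (he : ∀ i ∈ s, 1 ≤ e i) :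
    constantCoeff (R := ℚ) (∏ i ∈ s, (1 - (X:PS)^(e i))) = 1 := by
  rw [map_prod, Finset.prod_eq_one]
  intro i hi
  have : (constantCoeff (R := ℚ)) ((X : PS) ^ (e i)) = 0 := by
    rw [map_pow, constantCoeff_X, zero_pow (by have := he i hi; omega)]
  rw [map_sub, map_one, this, sub_zero]

end RR2

open RR2 in
/-- The second Rogers–Ramanujan identity, stated coefficientwise as formal power series:
`Σ_{n≥0} q^(n²+n)/(q;q)_n = 1/((q²;q⁵)_∞ (q³;q⁵)_∞)`. -/
theorem rogers_ramanujan_second :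
    ∀ N : ℕ,
      (PowerSeries.coeff (R := ℚ) N)
          (∑ n ∈ Finset.range (N + 1),
            (X : PowerSeries ℚ) ^ (n ^ 2 + n) * (∏ j ∈ Finset.range n, (1 - (X : PowerSeries ℚ) ^ (j + 1)))⁻¹) =
        (PowerSeries.coeff (R := ℚ) N)
          (((∏ k ∈ Finset.range (N + 1), (1 - (X : PowerSeries ℚ) ^ (2 + 5 * k))) *
            (∏ k ∈ Finset.range (N + 1), (1 - (X : PowerSeries ℚ) ^ (3 + 5 * k))))⁻¹) := by
  intro N
  set L : ℕ := 2*N+2 with hLdef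
  set M : ℕ := 5*L with hMdef
  have hM10 : M = 10*N+10 := by omega
  -- identify the statement's objects
  have hF1 : ∀ n : ℕ, (∏ j ∈ Finset.range n, (1 - (X : PS) ^ (j + 1))) = F 1 n := by
    intro n
    rw [F]
    exact Finset.prod_congr rfl (fun i _ => by rw [one_mul])
  have hLHS : (∑ n ∈ Finset.range (N + 1),
        (X : PS) ^ (n ^ 2 + n) * (∏ j ∈ Finset.range n, (1 - (X : PS) ^ (j + 1)))⁻¹)
      = ∑ n ∈ Finset.range (N+1), (X:PS)^(n^2+n) * (F 1 n)⁻¹ := by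
    exact Finset.sum_congr rfl (fun n _ => by rw [hF1 n])
  rw [hLHS]
  set A : PS := ∑ n ∈ Finset.range (N+1), (X:PS)^(n^2+n) * (F 1 n)⁻¹ with hA
  set Q2 : PS := ∏ k ∈ Finset.range (N + 1), (1 - (X : PS) ^ (2 + 5 * k)) with hQ2
  set Q3 : PS := ∏ k ∈ Finset.range (N + 1), (1 - (X : PS) ^ (3 + 5 * k)) with hQ3
  -- constant coefficients
  have hQ2c : constantCoeff (R := ℚ) Q2 = 1 := constantCoeff_prod_one _ _ (fun i _ => by omega)
  have hQ3c : constantCoeff (R := ℚ) Q3 = 1 := constantCoeff_prod_one _ _ (fun i _ => by omega)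
  have hQc : constantCoeff (R := ℚ) (Q2*Q3) = 1 := by rw [map_mul, hQ2c, hQ3c, mul_one]
  have hQinv : (Q2*Q3) * (Q2*Q3)⁻¹ = 1 :=
    PowerSeries.mul_inv_cancel _ (by rw [hQc]; exact one_ne_zero)
  have hFinv : F 1 M * (F 1 M)⁻¹ = 1 := by
    rw [mul_comm]; exact F_inv_mul 1 M le_rfl
  -- the big congruence chain
  have K1 : (X:PS)^(N+1) ∣ A - E M := by
    have := step_A N M (by omega)
    have h2 := dvd_sub_comm.mp this
    rwa [e_eq_E] at h2
  have K2 : (X:PS)^(N+1) ∣ A - Th M * (F 1 M)⁻¹ := cg_trans K1 (step_C N M hM10)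
  have K3 : (X:PS)^(N+1) ∣ A * F 1 M - Th M := by
    have h := cg_mul K2 (by rw [sub_self]; exact dvd_zero _ : (X:PS)^(N+1) ∣ F 1 M - F 1 M)
    have he : Th M * (F 1 M)⁻¹ * F 1 M = Th M := by
      rw [mul_assoc, F_inv_mul 1 M le_rfl, mul_one]
    rwa [he] at h
  have K4 : (X:PS)^(N+1) ∣ A * F 1 M - Th L :=
    cg_trans K3 (Th_congr N (by omega) (by omega))
  -- products
  have K6a : (X:PS)^(N+1) ∣ Q2 - ∏ i ∈ Finset.range L, (1 - (X:PS)^(5*i+2)) := by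
    have h : Q2 = ∏ i ∈ Finset.range (N+1), (1 - (X:PS)^(5*i+2)) := by
      rw [hQ2]
      exact Finset.prod_congr rfl (fun i _ => by rw [Nat.add_comm (5*i) 2])
    rw [h]
    exact dvd_sub_comm.mp (prod_tail N 2 (by omega) (by omega))
  have K6b : (X:PS)^(N+1) ∣ Q3 - ∏ i ∈ Finset.range L, (1 - (X:PS)^(5*i+3)) := by
    have h : Q3 = ∏ i ∈ Finset.range (N+1), (1 - (X:PS)^(5*i+3)) := by
      rw [hQ3]
      exact Finset.prod_congr rfl (fun i _ => by rw [Nat.add_comm (5*i) 3])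
    rw [h]
    exact dvd_sub_comm.mp (prod_tail N 3 (by omega) (by omega))
  set A2 : PS := ∏ i ∈ Finset.range L, (1 - (X:PS)^(5*i+2)) with hA2
  set A3 : PS := ∏ i ∈ Finset.range L, (1 - (X:PS)^(5*i+3)) with hA3
  have K7 : (X:PS)^(N+1) ∣ A * F 1 M * (Q2 * Q3) - Th L * (A2 * A3) :=
    cg_mul K4 (cg_mul K6a K6b)
  have K8 : (X:PS)^(N+1) ∣ Th L * (A2 * A3) - F 1 M := by
    have h5 := dvd_sub_comm.mp (step_D N L hLdef)
    have h := cg_mul h5 (by rw [sub_self]; exact dvd_zero _ : (X:PS)^(N+1) ∣ A2 * A3 - A2 * A3)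
    have he : P14 L * F 5 L * (A2 * A3) = F 1 M := by
      rw [hMdef, F1_split]
      ring
    rwa [he] at h
  have key : (X:PS)^(N+1) ∣ A * F 1 M * (Q2 * Q3) - F 1 M := cg_trans K7 K8
  -- conclude
  apply cg_coeff
  have hIdent : A - (Q2*Q3)⁻¹
      = (A * F 1 M * (Q2*Q3) - F 1 M) * ((F 1 M)⁻¹ * (Q2*Q3)⁻¹) := by
    have expand : (A * F 1 M * (Q2*Q3) - F 1 M) * ((F 1 M)⁻¹ * (Q2*Q3)⁻¹)
        = A * (F 1 M * (F 1 M)⁻¹) * ((Q2*Q3) * (Q2*Q3)⁻¹)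
          - (F 1 M * (F 1 M)⁻¹) * (Q2*Q3)⁻¹ := by ring
    rw [expand, hFinv, hQinv]
    ring
  rw [hIdent]
  exact Dvd.dvd.mul_right key _
end
end

section
/- For m = 3k+1 with k ≥ 2, any ρ, σ ∈ ℤ^{k-1} and any 1 ≤ i ≤ k-2, the recurrence R_1 holds: S_m(ρ|σ) - S_m(ρ + δ_i - δ_{i+1} | σ) - z·q^{i + Σ_{j=1}^i ρ_j} · S_m(ρ + 2Σ_{j=1}^i δ_j | σ - Σ_{j=1}^i δ_j) = 0, as an identity of formal power series in q and z. -/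
noncomputable section
open PowerSeries

/-- `(q;q)_n = ∏_{j=1}^n (1-q^j)`. -/
def poch (n : ℕ) : PowerSeries ℚ := ∏ j ∈ Finset.range n, (1 - (X : PowerSeries ℚ) ^ (j + 1))

/-- `1/(q;q)_n`. -/
def pochInv (n : ℕ) : PowerSeries ℚ := (poch n)⁻¹

/-- Coefficient extraction at an integer exponent (`0` for negative exponents). -/
def coeffZ (b : ℤ) (f : PowerSeries ℚ) : ℚ :=
  if 0 ≤ b then PowerSeries.coeff b.toNat f else 0

/-- Pairs `(r,s)` of weakly decreasing tuples `r_1 ≥ … ≥ r_{K} ≥ 0` (supported on the first `K`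
coordinates, 0-indexed). -/
def Tup (K : ℕ) : Set ((ℕ → ℕ) × (ℕ → ℕ)) :=
  {p | (∀ t, p.1 (t + 1) ≤ p.1 t) ∧ (∀ t, K ≤ t → p.1 t = 0) ∧
       (∀ t, p.2 (t + 1) ≤ p.2 t) ∧ (∀ t, K ≤ t → p.2 t = 0)}

/-- The exponent `Σ_{t=1}^{K} (r_t² - r_t s_t + s_t² + ρ_t r_t + σ_t s_t)`. -/
def Equad (K : ℕ) (ρ σ : ℕ → ℤ) (r s : ℕ → ℕ) : ℤ :=
  ∑ t ∈ Finset.range K,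
    ((r t : ℤ) ^ 2 - (r t : ℤ) * (s t : ℤ) + (s t : ℤ) ^ 2 + ρ t * (r t : ℤ) + σ t * (s t : ℤ))

/-- `∏_{t=1}^{K-1} 1/((q;q)_{r_t - r_{t+1}} (q;q)_{s_t - s_{t+1}})`. -/
def Dser (K : ℕ) (r s : ℕ → ℕ) : PowerSeries ℚ :=
  ∏ t ∈ Finset.range (K - 1), (pochInv (r t - r (t + 1)) * pochInv (s t - s (t + 1)))

/-- Tail factor for `m = 3k-1`:
`q^{2 r_K s_K} / ((q;q)_{r_K} (q;q)_{s_K} (q;q)_{r_K+s_K+1})`. -/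
def tailm1 (a b : ℕ) : PowerSeries ℚ :=
  (X : PowerSeries ℚ) ^ (2 * a * b) * pochInv a * pochInv b * pochInv (a + b + 1)

/-- The coefficient of `z^a q^b` in the Kanade–Russell series `S_m(z; ρ|σ)` with the given
tail factor (`K = k-1`); the sum over tuples has finite support for each fixed `(a,b)`. -/
def Scoef (K : ℕ) (tail : ℕ → ℕ → PowerSeries ℚ) (ρ σ : ℕ → ℤ) (a : ℕ) (b : ℤ) : ℚ :=
  ∑ᶠ p ∈ {p ∈ Tup K | p.1 0 = a},
    coeffZ (b - Equad K ρ σ p.1 p.2) (Dser K p.1 p.2 * tail (p.1 (K - 1)) (p.2 (K - 1)))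

/-- Tail factor for `m = 3k+1`: `1/((q;q)_{r_K} (q;q)_{s_K} (q;q)_{r_K+s_K+1})`. -/
def tailp1 (a b : ℕ) : PowerSeries ℚ := pochInv a * pochInv b * pochInv (a + b + 1)


lemma constantCoeff_poch (n : ℕ) : constantCoeff (poch n) = 1 := by
  simp [poch, map_prod]

lemma poch_ne_zero (n : ℕ) : poch n ≠ 0 := by
  intro h
  have := constantCoeff_poch n
  rw [h, map_zero] at this
  exact zero_ne_one this

lemma poch_mul_pochInv (n : ℕ) : poch n * pochInv n = 1 :=
  PowerSeries.mul_inv_cancel _ (by rw [constantCoeff_poch]; exact one_ne_zero)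

lemma pochInv_succ (n : ℕ) : (1 - (X : PowerSeries ℚ) ^ (n + 1)) * pochInv (n + 1) = pochInv n := by
  have h1 : poch (n + 1) = poch n * (1 - (X : PowerSeries ℚ) ^ (n + 1)) := by
    rw [poch, Finset.prod_range_succ]; rfl
  have h2 : poch n * ((1 - (X : PowerSeries ℚ) ^ (n + 1)) * pochInv (n + 1))
      = poch n * pochInv n := by
    rw [← mul_assoc, ← h1, poch_mul_pochInv, poch_mul_pochInv]
  exact mul_left_cancel₀ (poch_ne_zero n) h2

lemma coeffZ_sub (b : ℤ) (f g : PowerSeries ℚ) :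
    coeffZ b (f - g) = coeffZ b f - coeffZ b g := by
  unfold coeffZ; split <;> simp

lemma coeffZ_X_pow_mul (n : ℕ) (b : ℤ) (f : PowerSeries ℚ) :
    coeffZ b ((X : PowerSeries ℚ) ^ n * f) = coeffZ (b - n) f := by
  unfold coeffZ
  rw [PowerSeries.coeff_X_pow_mul']
  split_ifs with h0 h1 h2 h2 h1 <;> first
    | rfl
    | (exfalso; omega)
    | (rw [show b.toNat - n = (b - (n:ℤ)).toNat by omega])


lemma quad_solve (x C D : ℤ) (hx : 0 ≤ x) (hC : 0 ≤ C) (h : x^2 ≤ C*x + D) :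
    x ≤ C + max D 0 := by
  by_contra hcon
  push_neg at hcon
  have h1 : D ≤ max D 0 := le_max_left D 0
  have h2 : (0:ℤ) ≤ max D 0 := le_max_right D 0
  nlinarith [mul_le_mul_of_nonneg_right hcon.le hx]

lemma finite_bounded (K A B : ℕ) :
    Set.Finite {p : (ℕ → ℕ) × (ℕ → ℕ) | (∀ t, p.1 t ≤ A) ∧ (∀ t, K ≤ t → p.1 t = 0) ∧
      (∀ t, p.2 t ≤ B) ∧ (∀ t, K ≤ t → p.2 t = 0)} := by
  set e : ((Fin K → Fin (A+1)) × (Fin K → Fin (B+1))) → (ℕ → ℕ) × (ℕ → ℕ) :=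
    fun g => (fun t => if h : t < K then (g.1 ⟨t, h⟩ : ℕ) else 0,
              fun t => if h : t < K then (g.2 ⟨t, h⟩ : ℕ) else 0) with he
  apply Set.Finite.subset (Set.finite_range e)
  rintro ⟨r, s⟩ ⟨h1, h2, h3, h4⟩
  refine ⟨(fun t => ⟨r t, Nat.lt_succ_of_le (h1 t)⟩, fun t => ⟨s t, Nat.lt_succ_of_le (h3 t)⟩), ?_⟩
  simp only [he, Prod.mk.injEq]
  constructor <;> funext t <;> dsimp <;> split
  · rfl
  · exact (h2 t (le_of_not_gt (by assumption))).symm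
  · rfl
  · exact (h4 t (le_of_not_gt (by assumption))).symm

lemma finite_support_main (K a : ℕ) (b : ℤ) (ρ σ : ℕ → ℤ) :
    Set.Finite {p : (ℕ → ℕ) × (ℕ → ℕ) | p ∈ Tup K ∧ p.1 0 = a ∧ Equad K ρ σ p.1 p.2 ≤ b} := by
  set Mf : ℕ → ℤ := fun t => ((a:ℤ) + |σ t|)^2 + |ρ t| * a with hMf
  have hMf0 : ∀ t, 0 ≤ Mf t := fun t => by positivity
  set M : ℤ := ∑ t ∈ Finset.range K, Mf t with hM
  set Nz : ℤ := (a:ℤ) + (∑ t ∈ Finset.range K, |σ t|) +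
    max (b + M + (∑ t ∈ Finset.range K, |ρ t|) * a) 0 with hNz
  apply (finite_bounded K a Nz.toNat).subset
  rintro ⟨r, s⟩ ⟨⟨m1, z1, m2, z2⟩, h0, hE⟩
  have hmono : Antitone r := antitone_nat_of_succ_le m1
  have hr : ∀ t, r t ≤ a := fun t => h0 ▸ hmono (Nat.zero_le t)
  refine ⟨hr, z1, ?_, z2⟩
  intro u
  show s u ≤ Nz.toNat
  by_cases hu : u < K
  · set F : ℕ → ℤ := fun t =>
      (r t : ℤ)^2 - (r t : ℤ) * (s t : ℤ) + (s t : ℤ)^2 + ρ t * (r t : ℤ) + σ t * (s t : ℤ)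
      with hF
    have hterm : ∀ t, -Mf t ≤ F t := by
      intro t
      have h1 : (r t : ℤ) ≤ a := by exact_mod_cast hr t
      have h2 : (0:ℤ) ≤ r t := Int.natCast_nonneg _
      have h3 : (0:ℤ) ≤ s t := Int.natCast_nonneg _
      have h6 : (0:ℤ) ≤ |ρ t| := abs_nonneg _
      have h7 : (0:ℤ) ≤ |σ t| := abs_nonneg _
      simp only [hMf, hF]
      nlinarith [sq_nonneg ((s t:ℤ) - (a:ℤ) - |σ t|), sq_nonneg (r t:ℤ),
        mul_le_mul_of_nonneg_right h1 h3,
        mul_le_mul_of_nonneg_right (neg_abs_le (ρ t)) h2,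
        mul_le_mul_of_nonneg_right (neg_abs_le (σ t)) h3,
        mul_le_mul_of_nonneg_left h1 h6,
        mul_nonneg (add_nonneg (Int.natCast_nonneg a) h7) h3]
    have htermu : (s u:ℤ)^2 - ((a:ℤ) + |σ u|) * s u - |ρ u| * a ≤ F u := by
      have h1 : (r u : ℤ) ≤ a := by exact_mod_cast hr u
      have h2 : (0:ℤ) ≤ r u := Int.natCast_nonneg _
      have h3 : (0:ℤ) ≤ s u := Int.natCast_nonneg _
      have h6 : (0:ℤ) ≤ |ρ u| := abs_nonneg _
      simp only [hF]
      nlinarith [sq_nonneg (r u:ℤ),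
        mul_le_mul_of_nonneg_right h1 h3,
        mul_le_mul_of_nonneg_right (neg_abs_le (ρ u)) h2,
        mul_le_mul_of_nonneg_right (neg_abs_le (σ u)) h3,
        mul_le_mul_of_nonneg_left h1 h6]
    have hsum : F u + ∑ x ∈ (Finset.range K).erase u, F x = Equad K ρ σ r s :=
      Finset.add_sum_erase _ F (Finset.mem_range.mpr hu)
    have hlow : ∑ x ∈ (Finset.range K).erase u, (-(Mf x)) ≤
        ∑ x ∈ (Finset.range K).erase u, F x :=
      Finset.sum_le_sum (fun x _ => hterm x)
    have hM2 : ∑ x ∈ (Finset.range K).erase u, Mf x ≤ M :=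
      Finset.sum_le_sum_of_subset_of_nonneg (Finset.erase_subset _ _) (fun x _ _ => hMf0 x)
    rw [Finset.sum_neg_distrib] at hlow
    have hq : (s u:ℤ)^2 ≤ ((a:ℤ) + |σ u|) * s u + (b + M + |ρ u| * a) := by linarith
    have hσ : |σ u| ≤ ∑ t ∈ Finset.range K, |σ t| :=
      Finset.single_le_sum (fun t _ => abs_nonneg (σ t)) (Finset.mem_range.mpr hu)
    have hρ : |ρ u| * a ≤ (∑ t ∈ Finset.range K, |ρ t|) * a :=
      mul_le_mul_of_nonneg_right
        (Finset.single_le_sum (fun t _ => abs_nonneg (ρ t)) (Finset.mem_range.mpr hu))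
        (Int.natCast_nonneg a)
    have hq2 : (s u:ℤ)^2 ≤ ((a:ℤ) + ∑ t ∈ Finset.range K, |σ t|) * s u +
        (b + M + (∑ t ∈ Finset.range K, |ρ t|) * a) := by
      have h3 : (0:ℤ) ≤ s u := Int.natCast_nonneg _
      nlinarith [mul_le_mul_of_nonneg_right hσ h3]
    have hfin : (s u : ℤ) ≤ Nz := by
      have := quad_solve (s u) ((a:ℤ) + ∑ t ∈ Finset.range K, |σ t|)
        (b + M + (∑ t ∈ Finset.range K, |ρ t|) * a) (Int.natCast_nonneg _)
        (by positivity) hq2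
      omega
    omega
  · have : s u = 0 := z2 u (le_of_not_gt hu)
    omega


def Phi (i : ℕ) (p : (ℕ → ℕ) × (ℕ → ℕ)) : (ℕ → ℕ) × (ℕ → ℕ) :=
  (fun t => if t < i then p.1 t - 1 else p.1 t, p.2)

/-- The summand of `Scoef` with tail `tailp1`. -/
def Fc (K : ℕ) (ρ σ : ℕ → ℤ) (b : ℤ) (p : (ℕ → ℕ) × (ℕ → ℕ)) : ℚ :=
  coeffZ (b - Equad K ρ σ p.1 p.2) (Dser K p.1 p.2 * tailp1 (p.1 (K - 1)) (p.2 (K - 1)))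

lemma Equad_rho2 (K i : ℕ) (hi1 : 1 ≤ i) (hiK : i + 1 ≤ K) (ρ σ : ℕ → ℤ) (r s : ℕ → ℕ) :
    Equad K (fun t => if t = i - 1 then ρ t + 1 else if t = i then ρ t - 1 else ρ t) σ r s
      = Equad K ρ σ r s + ((r (i - 1) : ℤ) - r i) := by
  unfold Equad
  have hstep : ∀ t ∈ Finset.range K,
      ((r t : ℤ) ^ 2 - (r t : ℤ) * (s t : ℤ) + (s t : ℤ) ^ 2 +
        (if t = i - 1 then ρ t + 1 else if t = i then ρ t - 1 else ρ t) * (r t : ℤ)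
        + σ t * (s t : ℤ))
      = ((r t : ℤ) ^ 2 - (r t : ℤ) * (s t : ℤ) + (s t : ℤ) ^ 2 + ρ t * (r t : ℤ)
        + σ t * (s t : ℤ))
        + ((if t = i - 1 then (r t : ℤ) else 0) + (if t = i then -(r t : ℤ) else 0)) := by
    intro t _
    by_cases h1 : t = i - 1
    · rw [if_pos h1, if_pos h1, if_neg (by omega : ¬ t = i)]
      ring
    · rw [if_neg h1, if_neg h1]
      by_cases h2 : t = i
      · rw [if_pos h2, if_pos h2]; ring
      · rw [if_neg h2, if_neg h2]; ring
  have e1 : ∑ x ∈ Finset.range K,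
      ((if x = i - 1 then (r x : ℤ) else 0) + (if x = i then -(r x : ℤ) else 0))
      = (r (i - 1) : ℤ) - r i := by
    rw [Finset.sum_add_distrib,
      Finset.sum_ite_eq' (Finset.range K) (i - 1) (fun t => (r t : ℤ)),
      Finset.sum_ite_eq' (Finset.range K) i (fun t => -(r t : ℤ)),
      if_pos (Finset.mem_range.mpr (by omega : i - 1 < K)),
      if_pos (Finset.mem_range.mpr (by omega : i < K))]
    ring
  rw [Finset.sum_congr rfl hstep,
    show (∑ x ∈ Finset.range K,
        ((r x : ℤ) ^ 2 - (r x : ℤ) * (s x : ℤ) + (s x : ℤ) ^ 2 + ρ x * (r x : ℤ)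
          + σ x * (s x : ℤ)
          + ((if x = i - 1 then (r x : ℤ) else 0) + (if x = i then -(r x : ℤ) else 0))))
      = (∑ x ∈ Finset.range K,
          ((r x : ℤ) ^ 2 - (r x : ℤ) * (s x : ℤ) + (s x : ℤ) ^ 2 + ρ x * (r x : ℤ)
            + σ x * (s x : ℤ)))
        + ∑ x ∈ Finset.range K,
            ((if x = i - 1 then (r x : ℤ) else 0) + (if x = i then -(r x : ℤ) else 0))
      from Finset.sum_add_distrib, e1]

lemma Equad_rho3 (K i : ℕ) (hiK : i + 1 ≤ K) (ρ σ : ℕ → ℤ) (r s : ℕ → ℕ)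
    (hr : ∀ t, t < i → 1 ≤ r t) :
    Equad K (fun t => if t < i then ρ t + 2 else ρ t) (fun t => if t < i then σ t - 1 else σ t)
      (fun t => if t < i then r t - 1 else r t) s
      = Equad K ρ σ r s - ((i : ℤ) + ∑ j ∈ Finset.range i, ρ j) := by
  unfold Equad
  have hstep : ∀ t ∈ Finset.range K,
      (((if t < i then r t - 1 else r t : ℕ) : ℤ) ^ 2
        - ((if t < i then r t - 1 else r t : ℕ) : ℤ) * (s t : ℤ) + (s t : ℤ) ^ 2
        + (if t < i then ρ t + 2 else ρ t) * ((if t < i then r t - 1 else r t : ℕ) : ℤ)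
        + (if t < i then σ t - 1 else σ t) * (s t : ℤ))
      = ((r t : ℤ) ^ 2 - (r t : ℤ) * (s t : ℤ) + (s t : ℤ) ^ 2 + ρ t * (r t : ℤ)
        + σ t * (s t : ℤ)) - (if t < i then 1 + ρ t else 0) := by
    intro t _
    by_cases h : t < i
    · rw [if_pos h, if_pos h, if_pos h, if_pos h]
      have h1 : 1 ≤ r t := hr t h
      have hc : ((r t - 1 : ℕ) : ℤ) = (r t : ℤ) - 1 := by omega
      rw [hc]; ring
    · rw [if_neg h, if_neg h, if_neg h, if_neg h]
      ring
  rw [Finset.sum_congr rfl hstep, Finset.sum_sub_distrib]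
  congr 1
  have hsub : Finset.range i ⊆ Finset.range K := Finset.range_subset_range.mpr (by omega)
  rw [← Finset.sum_subset hsub (fun x _ hx =>
    if_neg (by simpa using hx) : ∀ x ∈ Finset.range K, x ∉ Finset.range i →
      (if x < i then 1 + ρ x else 0) = 0)]
  rw [Finset.sum_congr rfl (fun t ht => if_pos (Finset.mem_range.mp ht)),
    Finset.sum_add_distrib, Finset.sum_const, Finset.card_range]
  simp

lemma Dser_shift (K i : ℕ) (hi1 : 1 ≤ i) (hiK : i + 1 ≤ K) (r s : ℕ → ℕ)
    (hmon : ∀ t, r (t + 1) ≤ r t) (hr : ∀ t, t < i → 1 ≤ r t) (hlt : r i < r (i - 1)) :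
    Dser K (fun t => if t < i then r t - 1 else r t) s
      = (1 - (X : PowerSeries ℚ) ^ (r (i - 1) - r i)) * Dser K r s := by
  unfold Dser
  have hmem : i - 1 ∈ Finset.range (K - 1) := Finset.mem_range.mpr (by omega)
  rw [← Finset.mul_prod_erase _ _ hmem, ← Finset.mul_prod_erase _
    (fun t => pochInv (r t - r (t + 1)) * pochInv (s t - s (t + 1))) hmem]
  have hprod : ∏ t ∈ (Finset.range (K - 1)).erase (i - 1),
      (pochInv ((if t < i then r t - 1 else r t) - (if t + 1 < i then r (t + 1) - 1 else r (t + 1)))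
        * pochInv (s t - s (t + 1)))
      = ∏ t ∈ (Finset.range (K - 1)).erase (i - 1),
      (pochInv (r t - r (t + 1)) * pochInv (s t - s (t + 1))) := by
    apply Finset.prod_congr rfl
    intro t ht
    have htne : t ≠ i - 1 := (Finset.mem_erase.mp ht).1
    congr 2
    by_cases hB : t + 1 < i
    · have h1 : 1 ≤ r (t + 1) := hr _ hB
      have hm := hmon t
      rw [if_pos (by omega : t < i), if_pos hB]
      omega
    · rw [if_neg (by omega : ¬ t < i), if_neg hB]
  rw [hprod]
  have h2 : i - 1 + 1 = i := by omega
  have hslot : (if i - 1 < i then r (i - 1) - 1 else r (i - 1))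
      - (if i - 1 + 1 < i then r (i - 1 + 1) - 1 else r (i - 1 + 1))
      = r (i - 1) - r i - 1 := by
    rw [if_pos (by omega : i - 1 < i), h2, if_neg (by omega : ¬ i < i)]
    omega
  rw [hslot, h2]
  set n := r (i - 1) - r i with hn
  have hn1 : 1 ≤ n := by omega
  obtain ⟨m, hm⟩ : ∃ m, n = m + 1 := ⟨n - 1, by omega⟩
  rw [hm, show m + 1 - 1 = m by omega, ← pochInv_succ m]
  ring

lemma pointwise (K i : ℕ) (hi1 : 1 ≤ i) (hiK : i + 1 ≤ K) (ρ σ : ℕ → ℤ) (b : ℤ)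
    (p : (ℕ → ℕ) × (ℕ → ℕ)) (hp : p ∈ Tup K) :
    Fc K ρ σ b p
      - Fc K (fun t => if t = i - 1 then ρ t + 1 else if t = i then ρ t - 1 else ρ t) σ b p
    = if p.1 (i - 1) = p.1 i then 0
      else Fc K (fun t => if t < i then ρ t + 2 else ρ t)
        (fun t => if t < i then σ t - 1 else σ t)
        (b - ((i : ℤ) + ∑ j ∈ Finset.range i, ρ j)) (Phi i p) := by
  obtain ⟨r, s⟩ := p
  obtain ⟨m1, z1, m2, z2⟩ := hp
  simp only at m1 z1 m2 z2
  have hmono : Antitone r := antitone_nat_of_succ_le m1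
  have h2 : i - 1 + 1 = i := by omega
  have hri : r i ≤ r (i - 1) := by have := m1 (i - 1); rwa [h2] at this
  simp only [Fc, Phi]
  rw [Equad_rho2 K i hi1 hiK ρ σ r s]
  by_cases h : r (i - 1) = r i
  · rw [if_pos h, h]
    simp
  · rw [if_neg h]
    have hlt : r i < r (i - 1) := lt_of_le_of_ne hri (fun e => h e.symm)
    have hr1 : ∀ t, t < i → 1 ≤ r t := by
      intro t ht
      have : r (i - 1) ≤ r t := hmono (by omega)
      omega
    rw [Equad_rho3 K i hiK ρ σ r s hr1]
    rw [show (if K - 1 < i then r (K - 1) - 1 else r (K - 1)) = r (K - 1) from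
      if_neg (by omega)]
    rw [show b - ((i : ℤ) + ∑ j ∈ Finset.range i, ρ j)
        - (Equad K ρ σ r s - ((i : ℤ) + ∑ j ∈ Finset.range i, ρ j))
        = b - Equad K ρ σ r s by ring]
    rw [show b - (Equad K ρ σ r s + ((r (i - 1) : ℤ) - r i))
        = (b - Equad K ρ σ r s) - ((r (i - 1) - r i : ℕ) : ℤ) by omega]
    rw [← coeffZ_X_pow_mul (r (i - 1) - r i) (b - Equad K ρ σ r s), ← coeffZ_sub]
    rw [Dser_shift K i hi1 hiK r s m1 hr1 hlt]
    congr 1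
    ring


lemma support_indicator_subset' {α : Type*} (S : Set α) (f : α → ℚ) :
    Function.support (S.indicator f) ⊆ S ∩ Function.support f := by
  intro x hx
  rw [Function.mem_support] at hx
  by_cases hS : x ∈ S
  · refine ⟨hS, ?_⟩
    rw [Function.mem_support]
    rwa [Set.indicator_of_mem hS] at hx
  · exact absurd (Set.indicator_of_notMem hS f) hx

lemma Fc_eq_zero (K : ℕ) (ρ σ : ℕ → ℤ) (b : ℤ) (p : (ℕ → ℕ) × (ℕ → ℕ))
    (h : b < Equad K ρ σ p.1 p.2) : Fc K ρ σ b p = 0 := by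
  unfold Fc coeffZ
  rw [if_neg (by omega)]

lemma fin_support_Fc (K a : ℕ) (b : ℤ) (ρ σ : ℕ → ℤ) :
    ({p : (ℕ → ℕ) × (ℕ → ℕ) | p ∈ Tup K ∧ p.1 0 = a} ∩
      Function.support (Fc K ρ σ b)).Finite := by
  apply (finite_support_main K a b ρ σ).subset
  rintro p ⟨⟨hp, h0⟩, hsupp⟩
  refine ⟨hp, h0, ?_⟩
  by_contra hb
  exact hsupp (Fc_eq_zero K ρ σ b p (by omega))

lemma bij_lemma (K i a : ℕ) (hi1 : 1 ≤ i) (hiK : i + 1 ≤ K) (ha : a ≠ 0) :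
    Set.BijOn (Phi i)
      ({p : (ℕ → ℕ) × (ℕ → ℕ) | p ∈ Tup K ∧ p.1 0 = a} ∩ {p | p.1 (i - 1) ≠ p.1 i})
      {p : (ℕ → ℕ) × (ℕ → ℕ) | p ∈ Tup K ∧ p.1 0 = a - 1} := by
  have h2 : i - 1 + 1 = i := by omega
  refine ⟨?_, ?_, ?_⟩
  · -- MapsTo
    rintro ⟨r, s⟩ ⟨⟨⟨m1, z1, m2, z2⟩, h0⟩, hne⟩
    replace m1 : ∀ t, r (t + 1) ≤ r t := m1
    replace z1 : ∀ t, K ≤ t → r t = 0 := z1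
    have hne' : r (i - 1) ≠ r i := hne
    have h0' : r 0 = a := h0
    have hri : r i ≤ r (i - 1) := by have := m1 (i - 1); rwa [h2] at this
    have hmono : Antitone r := antitone_nat_of_succ_le m1
    have hge : ∀ t, t < i → 1 ≤ r t := by
      intro t ht
      have := hmono (show i - 1 ≥ t by omega)
      omega
    refine ⟨⟨?_, ?_, m2, z2⟩, ?_⟩
    · intro t
      have hm := m1 t
      show (if t + 1 < i then r (t + 1) - 1 else r (t + 1)) ≤
        (if t < i then r t - 1 else r t)
      by_cases hc1 : t < i
      · have hg := hge t hc1
        rw [if_pos hc1]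
        by_cases hc2 : t + 1 < i
        · rw [if_pos hc2]
          omega
        · rw [if_neg hc2]
          have h3 : t + 1 = i := by omega
          have h4 : t = i - 1 := by omega
          rw [h3, h4]
          omega
      · rw [if_neg hc1, if_neg (by omega : ¬ t + 1 < i)]
        exact hm
    · intro t ht
      show (if t < i then r t - 1 else r t) = 0
      rw [if_neg (by omega)]
      exact z1 t ht
    · show (if 0 < i then r 0 - 1 else r 0) = a - 1
      rw [if_pos (by omega)]
      omega
  · -- InjOn
    rintro ⟨r, s⟩ ⟨⟨⟨m1, z1, _, _⟩, h0⟩, hne⟩ ⟨r', s'⟩ ⟨⟨⟨m1', z1', _, _⟩, h0'⟩, hne'⟩ heq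
    replace m1 : ∀ t, r (t + 1) ≤ r t := m1
    replace m1' : ∀ t, r' (t + 1) ≤ r' t := m1'
    have hne2 : r (i - 1) ≠ r i := hne
    have hne2' : r' (i - 1) ≠ r' i := hne'
    have hge : ∀ t, t < i → 1 ≤ r t := by
      intro t ht
      have hri : r i ≤ r (i - 1) := by have := m1 (i - 1); rwa [h2] at this
      have := (antitone_nat_of_succ_le m1) (show i - 1 ≥ t by omega)
      omega
    have hge' : ∀ t, t < i → 1 ≤ r' t := by
      intro t ht
      have hri : r' i ≤ r' (i - 1) := by have := m1' (i - 1); rwa [h2] at this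
      have := (antitone_nat_of_succ_le m1') (show i - 1 ≥ t by omega)
      omega
    simp only [Phi, Prod.mk.injEq] at heq
    obtain ⟨he1, he2⟩ := heq
    have hf := congrFun he1
    simp only [Prod.mk.injEq]
    refine ⟨funext fun t => ?_, he2⟩
    have hft := hf t
    by_cases ht : t < i
    · rw [if_pos ht, if_pos ht] at hft
      have := hge t ht
      have := hge' t ht
      omega
    · rwa [if_neg ht, if_neg ht] at hft
  · -- SurjOn
    rintro ⟨r, s⟩ ⟨⟨m1, z1, m2, z2⟩, h0⟩
    replace m1 : ∀ t, r (t + 1) ≤ r t := m1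
    replace z1 : ∀ t, K ≤ t → r t = 0 := z1
    have h0' : r 0 = a - 1 := h0
    refine ⟨(fun t => if t < i then r t + 1 else r t, s), ⟨⟨⟨?_, ?_, m2, z2⟩, ?_⟩, ?_⟩, ?_⟩
    · intro t
      have hm := m1 t
      show (if t + 1 < i then r (t + 1) + 1 else r (t + 1)) ≤
        (if t < i then r t + 1 else r t)
      split_ifs <;> omega
    · intro t ht
      show (if t < i then r t + 1 else r t) = 0
      rw [if_neg (by omega)]
      exact z1 t ht
    · show (if 0 < i then r 0 + 1 else r 0) = a
      rw [if_pos (by omega)]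
      omega
    · show (if i - 1 < i then r (i - 1) + 1 else r (i - 1)) ≠ (if i < i then r i + 1 else r i)
      rw [if_pos (by omega), if_neg (by omega)]
      have hri : r i ≤ r (i - 1) := by have := m1 (i - 1); rwa [h2] at this
      omega
    · simp only [Phi, Prod.mk.injEq]
      refine ⟨funext fun t => ?_, trivial⟩
      by_cases ht : t < i
      · rw [if_pos ht, if_pos ht]
        omega
      · rw [if_neg ht, if_neg ht]

lemma empty_lemma (K i : ℕ) :
    ({p : (ℕ → ℕ) × (ℕ → ℕ) | p ∈ Tup K ∧ p.1 0 = 0} ∩ {p | p.1 (i - 1) ≠ p.1 i}) = ∅ := by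
  ext ⟨r, s⟩
  simp only [Set.mem_inter_iff, Set.mem_setOf_eq, Set.mem_empty_iff_false, iff_false, not_and]
  rintro ⟨⟨m1, _, _, _⟩, h0⟩
  have hmono : Antitone r := antitone_nat_of_succ_le m1
  have h1 : r (i - 1) = 0 := Nat.le_zero.mp (h0 ▸ hmono (Nat.zero_le _))
  have hx : r i = 0 := Nat.le_zero.mp (h0 ▸ hmono (Nat.zero_le _))
  show ¬ r (i - 1) ≠ r i
  omega

lemma main_lemma (k : ℕ) (hk : 2 ≤ k) (ρ σ : ℕ → ℤ) (i : ℕ) (hi1 : 1 ≤ i) (hi2 : i ≤ k - 2)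
    (a : ℕ) (b : ℤ) :
    Scoef (k - 1) tailp1 ρ σ a b
      - Scoef (k - 1) tailp1
          (fun t => if t = i - 1 then ρ t + 1 else if t = i then ρ t - 1 else ρ t) σ a b
      - (if a = 0 then 0 else
          Scoef (k - 1) tailp1 (fun t => if t < i then ρ t + 2 else ρ t)
            (fun t => if t < i then σ t - 1 else σ t) (a - 1)
            (b - ((i : ℤ) + ∑ j ∈ Finset.range i, ρ j))) = 0 := by
  set K := k - 1 with hK
  have hiK : i + 1 ≤ K := by omega
  set ρ₂ : ℕ → ℤ := fun t => if t = i - 1 then ρ t + 1 else if t = i then ρ t - 1 else ρ t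
    with hρ₂
  set ρ₃ : ℕ → ℤ := fun t => if t < i then ρ t + 2 else ρ t with hρ₃
  set σ₃ : ℕ → ℤ := fun t => if t < i then σ t - 1 else σ t with hσ₃
  set e : ℤ := (i : ℤ) + ∑ j ∈ Finset.range i, ρ j with he
  set S : Set ((ℕ → ℕ) × (ℕ → ℕ)) := {p | p ∈ Tup K ∧ p.1 0 = a} with hS
  set S' : Set ((ℕ → ℕ) × (ℕ → ℕ)) := S ∩ {p | p.1 (i - 1) ≠ p.1 i} with hS'
  set T : Set ((ℕ → ℕ) × (ℕ → ℕ)) := {p | p ∈ Tup K ∧ p.1 0 = a - 1} with hT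
  have hS1 : Scoef K tailp1 ρ σ a b = ∑ᶠ p ∈ S, Fc K ρ σ b p := rfl
  have hS2 : Scoef K tailp1 ρ₂ σ a b = ∑ᶠ p ∈ S, Fc K ρ₂ σ b p := rfl
  have hS3 : Scoef K tailp1 ρ₃ σ₃ (a - 1) (b - e) = ∑ᶠ p ∈ T, Fc K ρ₃ σ₃ (b - e) p := rfl
  have key : ∀ p ∈ S, Fc K ρ σ b p - Fc K ρ₂ σ b p
      = if p.1 (i - 1) = p.1 i then 0 else Fc K ρ₃ σ₃ (b - e) (Phi i p) :=
    fun p hp => pointwise K i hi1 hiK ρ σ b p hp.1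
  have hAB : Scoef K tailp1 ρ σ a b - Scoef K tailp1 ρ₂ σ a b
      = ∑ᶠ p ∈ S, (Fc K ρ σ b p - Fc K ρ₂ σ b p) := by
    rw [hS1, hS2, finsum_mem_def, finsum_mem_def, finsum_mem_def,
      ← finsum_sub_distrib
        ((fin_support_Fc K a b ρ σ).subset (support_indicator_subset' S (Fc K ρ σ b)))
        ((fin_support_Fc K a b ρ₂ σ).subset (support_indicator_subset' S (Fc K ρ₂ σ b)))]
    congr 1
    funext p
    by_cases hp : p ∈ S
    · simp [Set.indicator_of_mem hp]
    · simp [Set.indicator_of_notMem hp]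
  have hstep2 : ∑ᶠ p ∈ S, (Fc K ρ σ b p - Fc K ρ₂ σ b p)
      = ∑ᶠ p ∈ S', (Fc K ρ σ b p - Fc K ρ₂ σ b p) := by
    apply finsum_mem_inter_support_eq
    ext p
    simp only [Set.mem_inter_iff, Function.mem_support]
    constructor
    · rintro ⟨hpS, hsupp⟩
      refine ⟨⟨hpS, ?_⟩, hsupp⟩
      intro heq
      rw [key p hpS, if_pos heq] at hsupp
      exact hsupp rfl
    · rintro ⟨⟨hpS, _⟩, hsupp⟩
      exact ⟨hpS, hsupp⟩
  by_cases ha : a = 0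
  · subst ha
    rw [if_pos rfl, sub_zero, hAB, hstep2]
    rw [show S' = ∅ from (by rw [hS', hS]; exact empty_lemma K i), finsum_mem_empty]
  · rw [if_neg ha, hAB, hstep2]
    have hbij : Set.BijOn (Phi i) S' T := bij_lemma K i a hi1 hiK ha
    have hstep3 : ∑ᶠ p ∈ S', (Fc K ρ σ b p - Fc K ρ₂ σ b p)
        = ∑ᶠ q ∈ T, Fc K ρ₃ σ₃ (b - e) q :=
      finsum_mem_eq_of_bijOn (Phi i) hbij
        (fun p hp => by rw [key p hp.1, if_neg hp.2])
    rw [hstep3, hS3, sub_self]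

/-- The recurrence `R₁⁽ⁱ⁾(ρ|σ)` for `m = 3k+1`:
`S_m(ρ|σ) - S_m(ρ+δ_i-δ_{i+1}|σ) - z q^{i+Σ_{j=1}^i ρ_j} S_m(ρ+2Σ_{j≤i}δ_j | σ-Σ_{j≤i}δ_j) = 0`,
stated coefficientwise in `z^a q^b` (1-indexed `δ_i` corresponds to 0-indexed coordinate `i-1`;
multiplication by `z q^e` shifts `(a,b) ↦ (a-1, b-e)`). -/
theorem Sm_R1 (k : ℕ) (hk : 2 ≤ k) (ρ σ : ℕ → ℤ) (i : ℕ) (hi1 : 1 ≤ i) (hi2 : i ≤ k - 2)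
    (a : ℕ) (b : ℤ) :
    (let K := k - 1
     let ρ₂ : ℕ → ℤ := fun t => if t = i - 1 then ρ t + 1 else if t = i then ρ t - 1 else ρ t
     let ρ₃ : ℕ → ℤ := fun t => if t < i then ρ t + 2 else ρ t
     let σ₃ : ℕ → ℤ := fun t => if t < i then σ t - 1 else σ t
     Scoef K tailp1 ρ σ a b - Scoef K tailp1 ρ₂ σ a b -
       (if a = 0 then 0
        else Scoef K tailp1 ρ₃ σ₃ (a - 1) (b - ((i : ℤ) + ∑ j ∈ Finset.range i, ρ j))) = 0) :=
  main_lemma k hk ρ σ i hi1 hi2 a b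
end
end
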